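/- arXiv:0904.3252 — 2 statements merged into one kernel-verified Lean document; each statement's English description precedes it below -/
import Mathlib

section
/- Let n ≥ 3 be an integer and let f : ℝ → ℂ be a continuous function. Then for every R > 0, the integral of the function x ↦ f(x_n) over the ball B(0,R) in ℝⁿ satisfies ∫_{B(0,R)} f(x_n) dx = ω_{n-1} ∫_0^R ρ ∫_{-ρ}^{ρ} f(s) (ρ² − s²)^{(n−3)/2} ds dρ, where x_n denotes the last coordinate of x. -/
open MeasureTheory Metric intervalIntegral

/-- The Lebesgue volume of the unit ball in `ℝ^k`. -/
noncomputable def unitBallVol (k : ℕ) : ℝ :=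
  (volume (ball (0 : EuclideanSpace ℝ (Fin k)) 1)).toReal

/-- The surface area of the unit sphere in `ℝ^k`, i.e. `ω_k = k · v_k`. -/
noncomputable def sphereArea (k : ℕ) : ℝ := k * unitBallVol k

lemma mem_ball_iff_sum (m : ℕ) (x : EuclideanSpace ℝ (Fin m)) (R : ℝ) (hR : 0 < R) :
    x ∈ ball (0 : EuclideanSpace ℝ (Fin m)) R ↔ ∑ i, x i ^ 2 < R ^ 2 := by
  rw [mem_ball_zero_iff, EuclideanSpace.norm_eq, Real.sqrt_lt' hR]
  simp [sq_abs]

-- volume of the slice {z : Fin m → ℝ | ∑ z j ^ 2 < c}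
lemma slice_volume (m : ℕ) (hm : 0 < m) (c : ℝ) (hc : 0 < c) :
    volume {z : Fin m → ℝ | ∑ j, z j ^ 2 < c} =
      ENNReal.ofReal (c ^ ((m : ℝ) / 2) * unitBallVol m) := by
  haveI : Nontrivial (EuclideanSpace ℝ (Fin m)) := by
    obtain ⟨k, rfl⟩ : ∃ k, m = k + 1 := ⟨m - 1, by omega⟩
    infer_instance
  have hmp : MeasurePreserving (MeasurableEquiv.toLp 2 (Fin m → ℝ)).symm volume volume :=
    EuclideanSpace.volume_preserving_symm_measurableEquiv_toLp _
  have hr : (0:ℝ) < Real.sqrt c := Real.sqrt_pos.2 hc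
  have : {z : Fin m → ℝ | ∑ j, z j ^ 2 < c} =
      (MeasurableEquiv.toLp 2 (Fin m → ℝ)).symm.symm ⁻¹'
        (ball (0 : EuclideanSpace ℝ (Fin m)) (Real.sqrt c)) := by
    ext z
    simp only [Set.mem_setOf_eq, Set.mem_preimage, mem_ball_iff_sum m _ _ hr,
      Real.sq_sqrt hc.le]
    rfl
  rw [this, ((hmp.symm _).measure_preimage measurableSet_ball.nullMeasurableSet)]
  rw [Measure.addHaar_ball _ _ hr.le, unitBallVol, finrank_euclideanSpace, Fintype.card_fin]
  rw [ENNReal.ofReal_mul (by positivity)]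
  congr 1
  · rw [← Real.rpow_natCast (Real.sqrt c) m, Real.sqrt_eq_rpow, ← Real.rpow_mul hc.le,
      show (1/2 * (m:ℝ)) = (m:ℝ)/2 by ring]
  · exact (ENNReal.ofReal_toReal (measure_ball_lt_top).ne).symm

lemma slice_measurableSet (m : ℕ) (c : ℝ) :
    MeasurableSet {z : Fin m → ℝ | ∑ j, z j ^ 2 < c} := by
  exact measurableSet_lt (by fun_prop) measurable_const

lemma sliceA (m : ℕ) (hm : 0 < m) (f : ℝ → ℂ) (hf : Continuous f) (R : ℝ) (hR : 0 < R) :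
    ∫ x in ball (0 : EuclideanSpace ℝ (Fin (m+1))) R, f (x (Fin.last m)) =
      ∫ s in Set.Ioo (-R) R, f s * ((unitBallVol m * (R^2 - s^2) ^ ((m:ℝ)/2) : ℝ) : ℂ) := by
  have he : MeasurePreserving (MeasurableEquiv.toLp 2 (Fin (m+1) → ℝ)).symm volume volume :=
    EuclideanSpace.volume_preserving_symm_measurableEquiv_toLp _
  set φ := MeasurableEquiv.piFinSuccAbove (fun _ : Fin (m+1) => ℝ) (Fin.last m) with hφdef
  have hφ : MeasurePreserving φ volume (volume.prod volume) :=
    measurePreserving_piFinSuccAbove (fun _ => volume) (Fin.last m)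
  set ψ := fun x : EuclideanSpace ℝ (Fin (m+1)) => φ ((MeasurableEquiv.toLp 2 (Fin (m+1) → ℝ)).symm x) with hψdef
  have hψ : MeasurePreserving ψ volume (volume.prod volume) := hφ.comp he
  have hemb : MeasurableEmbedding ψ :=
    (φ.measurableEmbedding).comp (MeasurableEquiv.toLp 2 (Fin (m+1) → ℝ)).symm.measurableEmbedding
  set A' : Set (ℝ × (Fin m → ℝ)) := {p | p.1 ^ 2 + ∑ j, p.2 j ^ 2 < R ^ 2} with hA'def
  have hφ1 : ∀ y : Fin (m+1) → ℝ, φ y = (y (Fin.last m), Fin.removeNth (Fin.last m) y) := by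
    intro y; rfl
  have hball : ball (0 : EuclideanSpace ℝ (Fin (m+1))) R = ψ ⁻¹' A' := by
    ext x
    rw [mem_ball_iff_sum _ _ _ hR, Set.mem_preimage, hψdef]
    simp only [hφ1, hA'def, Set.mem_setOf_eq]
    rw [Fin.sum_univ_succAbove (fun i => (x i)^2) (Fin.last m)]
    rfl
  have hA'meas : MeasurableSet A' := by
    apply measurableSet_lt _ measurable_const
    fun_prop
  have key : ∫ x in ball (0 : EuclideanSpace ℝ (Fin (m+1))) R, f (x (Fin.last m)) =
      ∫ p in A', f p.1 ∂(volume.prod volume) := by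
    rw [hball]
    exact hψ.setIntegral_preimage_emb hemb (fun p => f p.1) A'
  rw [key]
  -- bound for f on [-R, R]
  obtain ⟨C, hC⟩ := (isCompact_Icc (a := -R) (b := R)).exists_bound_of_continuousOn
    hf.continuousOn
  -- integrability
  have hsub : A' ⊆ (Set.Ioc (-R) R) ×ˢ {z : Fin m → ℝ | ∑ j, z j ^ 2 < R ^ 2} := by
    rintro ⟨s, z⟩ h
    have h1 : s ^ 2 < R ^ 2 := by
      have : (0:ℝ) ≤ ∑ j, z j ^ 2 := Finset.sum_nonneg fun j _ => sq_nonneg _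
      simp only [hA'def, Set.mem_setOf_eq] at h; linarith
    have h2 : (0:ℝ) ≤ s ^ 2 := sq_nonneg _
    constructor
    · constructor <;> nlinarith
    · simp only [Set.mem_setOf_eq]
      simp only [hA'def, Set.mem_setOf_eq] at h
      nlinarith [sq_nonneg s]
  have hfin : (volume.prod volume) A' < ⊤ := by
    apply lt_of_le_of_lt (measure_mono hsub)
    rw [Measure.prod_prod]
    exact ENNReal.mul_lt_top (by simp) (by
      rw [slice_volume m hm _ (by positivity)]; exact ENNReal.ofReal_lt_top)
  have hint : IntegrableOn (fun p : ℝ × (Fin m → ℝ) => f p.1) A' (volume.prod volume) := by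
    apply Measure.integrableOn_of_bounded hfin.ne
    · exact (hf.comp continuous_fst).aestronglyMeasurable
    · rw [ae_restrict_iff' hA'meas]
      filter_upwards with p hp
      apply hC
      have h1 : p.1 ^ 2 < R ^ 2 := by
        have : (0:ℝ) ≤ ∑ j, p.2 j ^ 2 := Finset.sum_nonneg fun j _ => sq_nonneg _
        simp only [hA'def, Set.mem_setOf_eq] at hp; linarith
      constructor <;> nlinarith
  rw [← MeasureTheory.integral_indicator hA'meas, integral_prod _ ((integrable_indicator_iff hA'meas).2 hint)]
  have hfun : (fun s => ∫ z, A'.indicator (fun p : ℝ × (Fin m → ℝ) => f p.1) (s, z)) =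
      (Set.Ioo (-R) R).indicator
        (fun s => f s * ((unitBallVol m * (R^2 - s^2) ^ ((m:ℝ)/2) : ℝ) : ℂ)) := by
    funext s
    by_cases hs : s ∈ Set.Ioo (-R) R
    · rw [Set.indicator_of_mem hs]
      have hc : 0 < R ^ 2 - s ^ 2 := by
        obtain ⟨h1, h2⟩ := hs; nlinarith
      have hzz : (fun z : Fin m → ℝ => A'.indicator (fun p : ℝ × (Fin m → ℝ) => f p.1) (s, z)) =
          Set.indicator {z : Fin m → ℝ | ∑ j, z j ^ 2 < R ^ 2 - s ^ 2} (fun _ => f s) := by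
        funext z
        by_cases hz : z ∈ {z : Fin m → ℝ | ∑ j, z j ^ 2 < R ^ 2 - s ^ 2}
        · rw [Set.indicator_of_mem hz, Set.indicator_of_mem]
          simp only [hA'def, Set.mem_setOf_eq] at hz ⊢; linarith [hz]
        · rw [Set.indicator_of_notMem hz, Set.indicator_of_notMem]
          simp only [hA'def, Set.mem_setOf_eq] at hz ⊢; intro h; exact hz (by linarith)
      have hv : (0:ℝ) ≤ unitBallVol m := ENNReal.toReal_nonneg
      have hnn : (0:ℝ) ≤ (R^2-s^2) ^ ((m:ℝ)/2) * unitBallVol m :=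
        mul_nonneg (Real.rpow_nonneg hc.le _) hv
      rw [hzz, MeasureTheory.integral_indicator (slice_measurableSet m _), setIntegral_const, measureReal_def,
        slice_volume m hm _ hc, ENNReal.toReal_ofReal hnn]
      rw [Complex.real_smul]
      push_cast
      ring
    · rw [Set.indicator_of_notMem hs]
      have : (fun z : Fin m → ℝ => A'.indicator (fun p : ℝ × (Fin m → ℝ) => f p.1) (s, z)) =
          fun _ => 0 := by
        funext z
        apply Set.indicator_of_notMem
        simp only [hA'def, Set.mem_setOf_eq]
        intro h
        have h0 : (0:ℝ) ≤ ∑ j, z j ^ 2 := Finset.sum_nonneg fun j _ => sq_nonneg _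
        have h1 : s ^ 2 < R ^ 2 := by linarith
        apply hs
        constructor <;> nlinarith
      rw [this, MeasureTheory.integral_zero]
  rw [hfun, MeasureTheory.integral_indicator measurableSet_Ioo]

lemma contOn_rpow (β : ℝ) (hβ : 0 ≤ β) : ContinuousOn (fun x : ℝ => x ^ β) (Set.Ici 0) :=
  fun x _ => (Real.continuousAt_rpow_const x β (Or.inr hβ)).continuousWithinAt


lemma ftc_aux (m : ℕ) (hm : 2 ≤ m) (s R : ℝ) (hs : |s| < R) :
    ∫ ρ in Set.Ioo |s| R, ρ * (ρ ^ 2 - s ^ 2) ^ (((m:ℝ) - 2) / 2) =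
      (R ^ 2 - s ^ 2) ^ ((m:ℝ) / 2) / m := by
  have hm0 : (0:ℝ) < m := by positivity
  have hβ : (0:ℝ) ≤ ((m:ℝ) - 2) / 2 := by
    have : (2:ℝ) ≤ m := by exact_mod_cast hm
    linarith
  have hderiv : ∀ ρ ∈ Set.uIcc |s| R,
      HasDerivAt (fun ρ => (ρ ^ 2 - s ^ 2) ^ ((m:ℝ) / 2) / m)
        (ρ * (ρ ^ 2 - s ^ 2) ^ (((m:ℝ) - 2) / 2)) ρ := by
    intro ρ _
    have h1 : HasDerivAt (fun ρ : ℝ => ρ ^ 2 - s ^ 2) (2 * ρ) ρ := by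
      simpa using (hasDerivAt_pow 2 ρ).sub_const (s ^ 2)
    have h2 : HasDerivAt (fun x : ℝ => x ^ ((m:ℝ) / 2))
        (((m:ℝ) / 2) * (ρ ^ 2 - s ^ 2) ^ ((m:ℝ) / 2 - 1)) (ρ ^ 2 - s ^ 2) :=
      Real.hasDerivAt_rpow_const (Or.inr (by
        rw [le_div_iff₀ (by norm_num)]
        exact_mod_cast (by exact_mod_cast hm : (2:ℝ) ≤ m)))
    have h3 := (h2.comp ρ h1).div_const (m : ℝ)
    refine h3.congr_deriv ?_
    rw [show (m:ℝ) / 2 - 1 = ((m:ℝ) - 2) / 2 by ring]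
    field_simp
  have hcont : ContinuousOn (fun ρ : ℝ => ρ * (ρ ^ 2 - s ^ 2) ^ (((m:ℝ) - 2) / 2))
      (Set.uIcc |s| R) := by
    apply continuousOn_id.mul
    apply (contOn_rpow _ hβ).comp ((continuous_pow 2).sub continuous_const).continuousOn
    intro ρ hρ
    rw [Set.uIcc_of_le hs.le] at hρ
    have h1 : |s| ≤ ρ := hρ.1
    have := abs_nonneg s
    simp only [Set.mem_Ici, Pi.sub_apply, sub_nonneg]
    calc s ^ 2 = |s| ^ 2 := (sq_abs s).symm
    _ ≤ ρ ^ 2 := by nlinarith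
  have := intervalIntegral.integral_eq_sub_of_hasDerivAt hderiv
    (hcont.intervalIntegrable)
  rw [intervalIntegral.integral_of_le hs.le, integral_Ioc_eq_integral_Ioo] at this
  rw [this, sq_abs, sub_self, Real.zero_rpow (by positivity), zero_div, sub_zero]

lemma rhsB (m : ℕ) (hm : 2 ≤ m) (f : ℝ → ℂ) (hf : Continuous f) (R : ℝ) (hR : 0 < R) :
    (∫ ρ in (0:ℝ)..R, (ρ:ℂ) * ∫ s in (-ρ)..ρ,
        f s * (((ρ ^ 2 - s ^ 2) ^ (((m:ℝ) - 2) / 2) : ℝ) : ℂ)) =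
      ∫ s in Set.Ioo (-R) R, f s * (((R ^ 2 - s ^ 2) ^ ((m:ℝ) / 2) / m : ℝ) : ℂ) := by
  have hβ : (0:ℝ) ≤ ((m:ℝ) - 2) / 2 := by
    have : (2:ℝ) ≤ m := by exact_mod_cast hm
    linarith
  set β : ℝ := ((m:ℝ) - 2) / 2 with hβdef
  set K : ℝ × ℝ → ℂ :=
    fun p => (p.1 : ℂ) * (f p.2 * (((max (p.1 ^ 2 - p.2 ^ 2) 0) ^ β : ℝ) : ℂ)) with hKdef
  set T : Set (ℝ × ℝ) := {p | (0 < p.1 ∧ p.1 < R) ∧ -p.1 < p.2 ∧ p.2 < p.1} with hTdef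
  have hT : MeasurableSet T := by
    simp only [hTdef, Set.setOf_and]
    exact (((measurableSet_lt measurable_const measurable_fst).inter
      (measurableSet_lt measurable_fst measurable_const)).inter
      ((measurableSet_lt measurable_fst.neg measurable_snd).inter
      (measurableSet_lt measurable_snd measurable_fst)))
  have hbase : Continuous fun p : ℝ × ℝ => max (p.1 ^ 2 - p.2 ^ 2) 0 :=
    ((continuous_fst.pow 2).sub (continuous_snd.pow 2)).max continuous_const
  have hrpow : Continuous fun p : ℝ × ℝ => (max (p.1 ^ 2 - p.2 ^ 2) 0) ^ β :=
    (contOn_rpow β hβ).comp_continuous hbase (fun p => Set.mem_Ici.2 (le_max_right _ _))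
  have hKcont : Continuous K :=
    (Complex.continuous_ofReal.comp continuous_fst).mul
      ((hf.comp continuous_snd).mul (Complex.continuous_ofReal.comp hrpow))
  obtain ⟨C, hC⟩ := (isCompact_Icc (a := -R) (b := R)).exists_bound_of_continuousOn
    hf.continuousOn
  have hC0 : 0 ≤ C := le_trans (norm_nonneg _) (hC 0 (by constructor <;> linarith))
  have hTsub : T ⊆ Set.Ioc 0 R ×ˢ Set.Ioc (-R) R := by
    rintro ⟨ρ, s⟩ ⟨⟨h1, h2⟩, h3, h4⟩
    exact ⟨⟨h1, h2.le⟩, ⟨by linarith, by linarith⟩⟩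
  have hKint : Integrable (T.indicator K) (volume.prod volume) := by
    rw [integrable_indicator_iff hT]
    have hfinite : (volume.prod volume) T ≠ ⊤ := by
      refine (lt_of_le_of_lt (measure_mono hTsub) ?_).ne
      rw [Measure.prod_prod]
      exact ENNReal.mul_lt_top (by simp) (by simp)
    refine Measure.integrableOn_of_bounded (M := R * (C * (R ^ 2) ^ β)) hfinite hKcont.aestronglyMeasurable ?_
    · rw [ae_restrict_iff' hT]
      filter_upwards with p hp
      obtain ⟨⟨h1, h2⟩, h3, h4⟩ := hp
      have hx0 : (0:ℝ) ≤ p.1 ^ 2 - p.2 ^ 2 := by nlinarith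
      have hxR : max (p.1 ^ 2 - p.2 ^ 2) 0 ≤ R ^ 2 := by
        apply max_le (by nlinarith) (by positivity)
      rw [hKdef]
      simp only [norm_mul, Complex.norm_real]
      rw [Real.norm_eq_abs, Real.norm_eq_abs, abs_of_nonneg h1.le,
        abs_of_nonneg (Real.rpow_nonneg (le_max_right _ _) β)]
      have e1 : (max (p.1 ^ 2 - p.2 ^ 2) 0) ^ β ≤ (R ^ 2) ^ β :=
        Real.rpow_le_rpow (le_max_right _ _) hxR hβ
      have e2 : ‖f p.2‖ ≤ C := hC p.2 ⟨by linarith, by linarith⟩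
      have e3 : ‖f p.2‖ * (max (p.1 ^ 2 - p.2 ^ 2) 0) ^ β ≤ C * (R ^ 2) ^ β := by
        apply mul_le_mul e2 e1 (Real.rpow_nonneg (le_max_right _ _) β) hC0
      exact mul_le_mul h2.le e3
        (mul_nonneg (norm_nonneg _) (Real.rpow_nonneg (le_max_right _ _) β)) (by linarith)
  -- step 1 : interval integral equals full-plane integral of the indicator
  have h1 : (∫ ρ in (0:ℝ)..R, (ρ:ℂ) * ∫ s in (-ρ)..ρ,
        f s * (((ρ ^ 2 - s ^ 2) ^ β : ℝ) : ℂ)) =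
      ∫ ρ : ℝ, ∫ s : ℝ, T.indicator K (ρ, s) := by
    rw [intervalIntegral.integral_of_le hR.le, integral_Ioc_eq_integral_Ioo,
      ← MeasureTheory.integral_indicator measurableSet_Ioo]
    congr 1
    funext ρ
    by_cases hρ : ρ ∈ Set.Ioo (0:ℝ) R
    · rw [Set.indicator_of_mem hρ]
      have hsind : (fun s => T.indicator K (ρ, s)) =
          (Set.Ioo (-ρ) ρ).indicator (fun s => K (ρ, s)) := by
        funext s
        by_cases hsm : s ∈ Set.Ioo (-ρ) ρ
        · rw [Set.indicator_of_mem hsm, Set.indicator_of_mem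
            (by exact ⟨⟨hρ.1, hρ.2⟩, hsm.1, hsm.2⟩)]
        · rw [Set.indicator_of_notMem hsm, Set.indicator_of_notMem]
          rintro ⟨_, h3, h4⟩; exact hsm ⟨h3, h4⟩
      rw [hsind, MeasureTheory.integral_indicator measurableSet_Ioo]
      rw [← integral_Ioc_eq_integral_Ioo, ← intervalIntegral.integral_of_le (by linarith [hρ.1] : -ρ ≤ ρ)]
      rw [← intervalIntegral.integral_const_mul]
      apply intervalIntegral.integral_congr
      intro s hsm
      rw [Set.uIcc_of_le (by linarith [hρ.1] : -ρ ≤ ρ)] at hsm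
      have : (0:ℝ) ≤ ρ ^ 2 - s ^ 2 := by
        obtain ⟨ha, hb⟩ := hsm; nlinarith
      rw [hKdef]
      simp only
      rw [max_eq_left this]
    · rw [Set.indicator_of_notMem hρ]
      have : (fun s => T.indicator K (ρ, s)) = fun _ => 0 := by
        funext s
        apply Set.indicator_of_notMem
        rintro ⟨⟨h1', h2'⟩, _⟩
        exact hρ ⟨h1', h2'⟩
      rw [this, MeasureTheory.integral_zero]
  rw [h1]
  -- step 2 : Fubini swap
  rw [MeasureTheory.integral_integral_swap (by exact hKint)]
  -- step 3 : compute the inner integral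
  have h3 : (fun s => ∫ ρ : ℝ, T.indicator K (ρ, s)) =
      (Set.Ioo (-R) R).indicator
        (fun s => f s * (((R ^ 2 - s ^ 2) ^ ((m:ℝ) / 2) / m : ℝ) : ℂ)) := by
    funext s
    by_cases hs : s ∈ Set.Ioo (-R) R
    · rw [Set.indicator_of_mem hs]
      have hsR : |s| < R := abs_lt.2 ⟨hs.1, hs.2⟩
      have hind : (fun ρ => T.indicator K (ρ, s)) =
          (Set.Ioo |s| R).indicator (fun ρ => K (ρ, s)) := by
        funext ρ
        by_cases hρm : ρ ∈ Set.Ioo |s| R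
        · rw [Set.indicator_of_mem hρm, Set.indicator_of_mem]
          have hsρ : |s| < ρ := hρm.1
          have h0 : 0 < ρ := (abs_nonneg s).trans_lt hsρ
          have hab := abs_lt.1 hsρ
          exact ⟨⟨h0, hρm.2⟩, hab.1, hab.2⟩
        · rw [Set.indicator_of_notMem hρm, Set.indicator_of_notMem]
          rintro ⟨⟨h1', h2'⟩, h3', h4'⟩
          exact hρm ⟨abs_lt.2 ⟨h3', h4'⟩, h2'⟩
      rw [hind, MeasureTheory.integral_indicator measurableSet_Ioo]
      have hptw : ∀ ρ ∈ Set.Ioo |s| R, K (ρ, s) =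
          f s * (((ρ * (ρ ^ 2 - s ^ 2) ^ β : ℝ)) : ℂ) := by
        intro ρ hρm
        have h0 : 0 ≤ ρ ^ 2 - s ^ 2 := by
          have h1' : |s| < ρ := hρm.1
          nlinarith [sq_abs s, abs_nonneg s]
        rw [hKdef]
        simp only
        rw [max_eq_left h0]
        push_cast
        ring
      rw [setIntegral_congr_fun measurableSet_Ioo hptw, MeasureTheory.integral_const_mul]
      congr 1
      rw [← ftc_aux m hm s R hsR]
      exact _root_.integral_ofReal
    · rw [Set.indicator_of_notMem hs]
      have : (fun ρ => T.indicator K (ρ, s)) = fun _ => 0 := by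
        funext ρ
        apply Set.indicator_of_notMem
        rintro ⟨⟨h1', h2'⟩, h3', h4'⟩
        exact hs ⟨by linarith, by linarith⟩
      rw [this, MeasureTheory.integral_zero]
  rw [h3, MeasureTheory.integral_indicator measurableSet_Ioo]

/-- If `n ≥ 3` and `f : ℝ → ℂ` is continuous, then for every `R > 0`,
`∫_{B(0,R)} f(xₙ) dx = ω_{n-1} ∫₀^R ρ ∫_{-ρ}^{ρ} f(s) (ρ² − s²)^{(n−3)/2} ds dρ`. -/
theorem volume_integral_of_lastCoord (n : ℕ) (hn : 3 ≤ n) (f : ℝ → ℂ)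
    (hf : Continuous f) (R : ℝ) (hR : 0 < R) :
    ∫ x in ball (0 : EuclideanSpace ℝ (Fin n)) R, f (x ⟨n - 1, by omega⟩) =
      (sphereArea (n - 1) : ℂ) *
        ∫ ρ in (0 : ℝ)..R, (ρ : ℂ) *
          ∫ s in (-ρ)..ρ,
            f s * (((ρ ^ 2 - s ^ 2) ^ (((n : ℝ) - 3) / 2) : ℝ) : ℂ) := by
  obtain ⟨m, rfl⟩ : ∃ m, n = m + 1 := ⟨n - 1, by omega⟩
  have hm : 2 ≤ m := by omega
  have hm1 : 0 < m := by omega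
  have hexp : ((((m : ℕ) + 1 : ℕ) : ℝ) - 3) / 2 = ((m : ℝ) - 2) / 2 := by push_cast; ring
  simp only [hexp, Nat.add_sub_cancel]
  rw [rhsB m hm f hf R hR]
  have hL : (∫ x in ball (0 : EuclideanSpace ℝ (Fin (m + 1))) R,
        f (x (⟨m, by omega⟩ : Fin (m + 1)))) =
      ∫ s in Set.Ioo (-R) R,
        f s * ((unitBallVol m * (R ^ 2 - s ^ 2) ^ ((m : ℝ) / 2) : ℝ) : ℂ) :=
    sliceA m hm1 f hf R hR
  rw [hL]
  rw [← MeasureTheory.integral_const_mul]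
  apply setIntegral_congr_fun measurableSet_Ioo
  intro s hs
  have hmne : (m : ℂ) ≠ 0 := Nat.cast_ne_zero.2 (by omega)
  simp only [sphereArea]
  push_cast
  field_simp
end

section
/- Let n ≥ 2 be an even integer, let d_n^{−1} = n(n−2)⋯2, and let R > 0. Then for every Schwartz function φ ∈ 𝒮(ℝⁿ), d_n · ((1/R)(∂/∂R))^{(n−2)/2} ( (1/v_n) ∫_{B(0,R)} (R² − |x|²)^{−1/2} φ̂(x) dx ) = ∫_{ℝⁿ} (sin(R|ξ|)/|ξ|) · φ(ξ) dξ, where sin(R|ξ|)/|ξ| is interpreted as R at ξ = 0. -/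
open MeasureTheory Metric
open scoped Classical

/-- The operator `(1/R)(∂/∂R)` acting on complex-valued functions of `R`. -/
noncomputable def invRDerivC : (ℝ → ℂ) → (ℝ → ℂ) := fun g r => deriv g r / r

/-- The Fourier transform `φ̂(ξ) = ∫_{ℝⁿ} φ(x) e^{−i x·ξ} dx`. -/
noncomputable def fourierTf {n : ℕ} (φ : EuclideanSpace ℝ (Fin n) → ℂ)
    (ξ : EuclideanSpace ℝ (Fin n)) : ℂ :=
  ∫ x, φ x * Complex.exp (-Complex.I * ((inner ℝ x ξ : ℝ) : ℂ))


namespace FTTR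

open Set intervalIntegral

/-- Splitting of Euclidean space into first coordinate and the rest. -/
noncomputable def splitE (j : ℕ) :
    EuclideanSpace ℝ (Fin (j+1)) ≃ᵐ ℝ × EuclideanSpace ℝ (Fin j) :=
  (MeasurableEquiv.toLp 2 (Fin (j+1) → ℝ)).symm.trans
    ((MeasurableEquiv.piFinSuccAbove (fun _ => ℝ) 0).trans
      ((MeasurableEquiv.refl ℝ).prodCongr (MeasurableEquiv.toLp 2 (Fin j → ℝ))))

lemma splitE_mp (j : ℕ) : MeasurePreserving (splitE j) volume volume := by
  have h1 := EuclideanSpace.volume_preserving_symm_measurableEquiv_toLp (Fin (j+1))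
  have h2 := MeasureTheory.volume_preserving_piFinSuccAbove (fun _ : Fin (j+1) => ℝ) 0
  have h3 := (MeasurePreserving.id (volume : Measure ℝ)).prod
      (EuclideanSpace.volume_preserving_symm_measurableEquiv_toLp (Fin j)).symm
  exact (h3.comp h2).comp h1

lemma splitE_fst (j : ℕ) (x : EuclideanSpace ℝ (Fin (j+1))) : (splitE j x).1 = x 0 := rfl

lemma splitE_snd (j : ℕ) (x : EuclideanSpace ℝ (Fin (j+1))) (i : Fin j) :
    (splitE j x).2 i = x (Fin.succ i) := by
  show x (Fin.succAbove 0 i) = x (Fin.succ i)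
  rw [Fin.zero_succAbove]

lemma splitE_symm_zero (j : ℕ) (p : ℝ × EuclideanSpace ℝ (Fin j)) :
    ((splitE j).symm p) 0 = p.1 := by
  have h := (splitE j).apply_symm_apply p
  rw [← splitE_fst j ((splitE j).symm p), h]

lemma splitE_symm_normsq (j : ℕ) (p : ℝ × EuclideanSpace ℝ (Fin j)) :
    ‖(splitE j).symm p‖ ^ 2 = p.1 ^ 2 + ‖p.2‖ ^ 2 := by
  have h := (splitE j).apply_symm_apply p
  set x := (splitE j).symm p with hx
  have hnorm : ∀ (k : ℕ) (y : EuclideanSpace ℝ (Fin k)), ‖y‖ ^ 2 = ∑ i, (y i) ^ 2 := by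
    intro k y
    rw [EuclideanSpace.norm_eq, Real.sq_sqrt (by positivity)]
    simp [Real.norm_eq_abs, sq_abs]
  rw [hnorm, Fin.sum_univ_succ, hnorm _ p.2]
  have h1 : x 0 = p.1 := by rw [← splitE_fst j x, h]
  have h2 : ∀ i, x (Fin.succ i) = p.2 i := by
    intro i
    rw [← splitE_snd j x i, h]
  simp only [h1, h2]

lemma sqrt_zero_of_nonpos {a : ℝ} (h : a ≤ 0) : Real.sqrt a = 0 := by
  rwa [Real.sqrt_eq_zero']
  
lemma oneDim_zero {a t : ℝ} (h : a - t^2 ≤ 0) : 1 / Real.sqrt (a - t^2) = 0 := by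
  rw [sqrt_zero_of_nonpos h, div_zero]

lemma oneDim_vanish {a t : ℝ} (ht : t ∉ Ioo (-Real.sqrt a) (Real.sqrt a)) :
    1 / Real.sqrt (a - t^2) = 0 := by
  rcases le_or_gt a 0 with ha | ha
  · exact oneDim_zero (by nlinarith [sq_nonneg t])
  · apply oneDim_zero
    have hr : 0 < Real.sqrt a := Real.sqrt_pos.2 ha
    have : Real.sqrt a ≤ |t| := by
      rcases abs_cases t with ⟨h1, _⟩ | ⟨h1, _⟩ <;> 
      · simp only [mem_Ioo, not_and_or, not_lt] at ht
        rcases ht with h' | h' <;> [linarith; linarith]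
    have h2 : a ≤ t^2 := by
      have := Real.sq_sqrt ha.le
      nlinarith [abs_nonneg t, sq_abs t]
    linarith

/-- derivative fact: arcsin(t/r) has derivative 1/sqrt(r^2 - t^2) on (-r, r). -/
lemma hasDerivAt_arcsin_div {r t : ℝ} (hr : 0 < r) (ht : t ∈ Ioo (-r) r) :
    HasDerivAt (fun s => Real.arcsin (s / r)) (1 / Real.sqrt (r^2 - t^2)) t := by
  obtain ⟨h1, h2⟩ := ht
  have hne : t / r ≠ -1 := by
    intro h; apply absurd ((div_eq_iff hr.ne').1 h); nlinarith
  have hne' : t / r ≠ 1 := by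
    intro h; apply absurd ((div_eq_iff hr.ne').1 h); nlinarith
  have hd := (Real.hasDerivAt_arcsin hne hne').comp t ((hasDerivAt_id t).div_const r)
  refine hd.congr_deriv ?_
  symm
  have h3 : (0:ℝ) < 1 - (t/r)^2 := by
    have : (t/r)^2 < 1 := by
      rw [div_pow, div_lt_one (by positivity)]; nlinarith
    linarith
  have key : Real.sqrt (r^2 - t^2) = Real.sqrt (1 - (t/r)^2) * r := by
    have heq : r^2 - t^2 = (1 - (t/r)^2) * r^2 := by field_simp
    rw [heq, Real.sqrt_mul h3.le, Real.sqrt_sq hr.le]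
  rw [key, div_mul_div_comm, one_mul]

lemma oneDim_integrableOn (a : ℝ) :
    IntegrableOn (fun t : ℝ => 1 / Real.sqrt (a - t^2))
      (Ioo (-Real.sqrt a) (Real.sqrt a)) := by
  rcases le_or_gt a 0 with ha | ha
  · have : Real.sqrt a = 0 := sqrt_zero_of_nonpos ha
    rw [this]; simp
  · set r := Real.sqrt a with hrdef
    have hr : 0 < r := Real.sqrt_pos.2 ha
    have hra : r ^ 2 = a := Real.sq_sqrt ha.le
    have : IntegrableOn (fun t : ℝ => 1 / Real.sqrt (a - t^2)) (Ioc (-r) r) := by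
      apply intervalIntegral.integrableOn_deriv_of_nonneg
        (g := fun s => Real.arcsin (s / r))
      · exact (Real.continuous_arcsin.comp (continuous_id.div_const r)).continuousOn
      · intro x hx
        have := hasDerivAt_arcsin_div hr hx
        rwa [hra] at this
      · intro x _
        positivity
    exact this.mono_set Ioo_subset_Ioc_self

lemma oneDim_integrable (a : ℝ) :
    Integrable (fun t : ℝ => 1 / Real.sqrt (a - t^2)) := by
  have h := (oneDim_integrableOn a).integrable_of_forall_notMem_eq_zero
    (fun t ht => oneDim_vanish ht)
  exact h

lemma oneDim_integral (a : ℝ) :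
    ∫ t : ℝ, 1 / Real.sqrt (a - t^2) = if 0 < a then Real.pi else 0 := by
  rcases le_or_gt a 0 with ha | ha
  · rw [if_neg (not_lt.2 ha)]
    have : (fun t : ℝ => 1 / Real.sqrt (a - t^2)) = fun _ => 0 := by
      funext t; exact oneDim_zero (by nlinarith [sq_nonneg t])
    rw [this, integral_zero]
  · rw [if_pos ha]
    set r := Real.sqrt a with hrdef
    have hr : 0 < r := Real.sqrt_pos.2 ha
    have hra : r ^ 2 = a := Real.sq_sqrt ha.le
    rw [← setIntegral_eq_integral_of_forall_compl_eq_zero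
      (s := Ioo (-r) r) (fun t ht => oneDim_vanish ht)]
    rw [← integral_Ioc_eq_integral_Ioo, ← intervalIntegral.integral_of_le (by linarith)]
    have := intervalIntegral.integral_eq_sub_of_hasDeriv_right_of_le
      (f := fun s => Real.arcsin (s / r)) (f' := fun t => 1 / Real.sqrt (a - t^2))
      (by linarith : -r ≤ r)
      ((Real.continuous_arcsin.comp (continuous_id.div_const r)).continuousOn)
      (fun x hx => by
        have h := hasDerivAt_arcsin_div hr hx
        rw [hra] at h
        exact h.hasDerivWithinAt)
      (by
        rw [intervalIntegrable_iff_integrableOn_Ioo_of_le (by linarith)]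
        exact oneDim_integrableOn a)
    rw [this]
    simp only [neg_div, div_self hr.ne', Real.arcsin_one, Real.arcsin_neg]
    ring

-- placeholders from previous stages
lemma measurable_sliceFun {k : ℕ} (c : ℝ) :
    Measurable (fun w : EuclideanSpace ℝ (Fin k) => 1 / Real.sqrt (c - ‖w‖^2)) := by
  simp_rw [one_div]
  exact ((Real.continuous_sqrt.comp ((continuous_const.sub
    ((continuous_norm).pow 2)))).measurable).inv

lemma setOf_normsq_lt (k : ℕ) (c : ℝ) :
    {y : EuclideanSpace ℝ (Fin k) | ‖y‖^2 < c} = ball 0 (Real.sqrt c) := by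
  ext y
  simp only [mem_setOf_eq, mem_ball, dist_zero_right]
  rw [← Real.lt_sqrt (norm_nonneg y)]

lemma ballVol_toReal {k : ℕ} {r : ℝ} (hr : 0 < r) :
    (volume (ball (0 : EuclideanSpace ℝ (Fin k)) r)).toReal = unitBallVol k * r ^ k := by
  rcases Nat.eq_zero_or_pos k with hk | hk
  · subst hk
    have h0 : (volume : Measure (EuclideanSpace ℝ (Fin 0))) = Measure.dirac 0 :=
      volume_euclideanSpace_eq_dirac (Fin 0)
    have huniv : ∀ s : ℝ, 0 < s → ball (0 : EuclideanSpace ℝ (Fin 0)) s = univ := by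
      intro s hs
      apply eq_univ_of_forall
      intro y
      simp [mem_ball, dist_zero_right, Subsingleton.elim y 0, hs]
    rw [huniv r hr, h0]
    simp [unitBallVol, huniv 1 one_pos, h0]
  · have : Nontrivial (EuclideanSpace ℝ (Fin k)) := by
      have : 1 ≤ k := hk
      rcases Nat.exists_eq_add_of_le this with ⟨q, rfl⟩
      infer_instance
    rw [Measure.addHaar_ball volume 0 hr.le, finrank_euclideanSpace_fin]
    rw [ENNReal.toReal_mul, ENNReal.toReal_ofReal (by positivity)]
    rw [unitBallVol]
    ring

lemma slice_prod_integrable (p : ℕ) (c : ℝ) :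
    Integrable (fun q : ℝ × EuclideanSpace ℝ (Fin p) =>
      1 / Real.sqrt (c - q.1^2 - ‖q.2‖^2)) := by
  rw [Measure.volume_eq_prod]
  have hmeas : AEStronglyMeasurable
      (fun q : ℝ × EuclideanSpace ℝ (Fin p) => 1 / Real.sqrt (c - q.1^2 - ‖q.2‖^2))
      ((volume : Measure ℝ).prod volume) := by
    apply Measurable.aestronglyMeasurable
    simp_rw [one_div]
    exact ((Real.continuous_sqrt.comp (((continuous_const.sub
      ((continuous_fst.pow 2))).sub ((continuous_norm.comp continuous_snd).pow 2)))).measurable).inv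
  rw [integrable_prod_iff' hmeas]
  constructor
  · apply ae_of_all
    intro y
    have := oneDim_integrable (c - ‖y‖^2)
    simpa [sub_right_comm, sub_sub] using this
  · have hval : (fun y : EuclideanSpace ℝ (Fin p) =>
        ∫ t : ℝ, ‖1 / Real.sqrt (c - t^2 - ‖y‖^2)‖) =
        fun y => Set.indicator (ball (0:EuclideanSpace ℝ (Fin p)) (Real.sqrt c))
          (fun _ => Real.pi) y := by
      funext y
      have h1 : ∀ t : ℝ, ‖1 / Real.sqrt (c - t^2 - ‖y‖^2)‖ =
          1 / Real.sqrt ((c - ‖y‖^2) - t^2) := by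
        intro t
        rw [Real.norm_eq_abs, abs_of_nonneg (by positivity)]
        ring_nf
      simp_rw [h1]
      rw [oneDim_integral (c - ‖y‖^2)]
      rw [← setOf_normsq_lt p c]
      by_cases hy : ‖y‖^2 < c
      · rw [if_pos (by linarith), Set.indicator_of_mem (by simpa using hy)]
      · rw [if_neg (by intro h; exact hy (by linarith)), Set.indicator_of_notMem (by simpa using hy)]
    rw [hval]
    rw [integrable_indicator_iff measurableSet_ball]
    exact integrableOn_const measure_ball_lt_top.ne

lemma slice_integrable (p : ℕ) (c : ℝ) :
    Integrable (fun w : EuclideanSpace ℝ (Fin (p+1)) => 1 / Real.sqrt (c - ‖w‖^2)) := by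
  have h := slice_prod_integrable p c
  have hsymm : MeasurePreserving ((splitE p).symm) volume volume :=
    MeasurePreserving.symm _ (splitE_mp p)
  have hcomp := (hsymm.integrable_comp_emb
    (MeasurableEquiv.measurableEmbedding _)
    (g := fun w : EuclideanSpace ℝ (Fin (p+1)) => 1 / Real.sqrt (c - ‖w‖^2)))
  rw [← hcomp]
  have : (fun w : EuclideanSpace ℝ (Fin (p+1)) => 1 / Real.sqrt (c - ‖w‖^2)) ∘ (splitE p).symm
      = fun q : ℝ × EuclideanSpace ℝ (Fin p) => 1 / Real.sqrt (c - q.1^2 - ‖q.2‖^2) := by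
    funext q
    simp only [Function.comp_apply]
    rw [splitE_symm_normsq p q]
    ring_nf
  rw [this]
  exact h

lemma slice_integral (p : ℕ) (c : ℝ) :
    ∫ w : EuclideanSpace ℝ (Fin (p+1)), 1 / Real.sqrt (c - ‖w‖^2) =
      if 0 < c then Real.pi * unitBallVol p * (Real.sqrt c)^p else 0 := by
  have hsymm : MeasurePreserving ((splitE p).symm) volume volume :=
    MeasurePreserving.symm _ (splitE_mp p)
  rw [← hsymm.integral_comp (MeasurableEquiv.measurableEmbedding _)]
  have heq : (fun q : ℝ × EuclideanSpace ℝ (Fin p) =>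
      1 / Real.sqrt (c - ‖(splitE p).symm q‖^2)) =
      fun q : ℝ × EuclideanSpace ℝ (Fin p) => 1 / Real.sqrt (c - q.1^2 - ‖q.2‖^2) := by
    funext q
    rw [splitE_symm_normsq p q]
    ring_nf
  show ∫ q : ℝ × EuclideanSpace ℝ (Fin p), 1 / Real.sqrt (c - ‖(splitE p).symm q‖^2) = _
  rw [heq]
  have hint := slice_prod_integrable p c
  rw [Measure.volume_eq_prod] at hint ⊢
  rw [integral_prod_symm _ hint]
  have hin : ∀ y : EuclideanSpace ℝ (Fin p),
      ∫ t : ℝ, 1 / Real.sqrt (c - t^2 - ‖y‖^2) =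
      Set.indicator (ball (0:EuclideanSpace ℝ (Fin p)) (Real.sqrt c)) (fun _ => Real.pi) y := by
    intro y
    have h1 : ∀ t : ℝ, 1 / Real.sqrt (c - t^2 - ‖y‖^2) = 1 / Real.sqrt ((c - ‖y‖^2) - t^2) := by
      intro t; ring_nf
    simp_rw [h1]
    rw [oneDim_integral (c - ‖y‖^2), ← setOf_normsq_lt p c]
    by_cases hy : ‖y‖^2 < c
    · rw [if_pos (by linarith), Set.indicator_of_mem (by simpa using hy)]
    · rw [if_neg (by intro h; exact hy (by linarith)), Set.indicator_of_notMem (by simpa using hy)]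
  simp_rw [hin]
  rw [MeasureTheory.integral_indicator measurableSet_ball, setIntegral_const, smul_eq_mul]
  rcases lt_or_ge 0 c with hc | hc
  · rw [if_pos hc, measureReal_def, ballVol_toReal (Real.sqrt_pos.2 hc)]
    ring
  · rw [if_neg (not_lt.2 hc)]
    have : Real.sqrt c = 0 := by rwa [Real.sqrt_eq_zero']
    rw [this]
    simp

lemma integral_complex_ofReal {α : Type*} [MeasurableSpace α] {μ : Measure α} {f : α → ℝ} :
    ∫ x, ((f x : ℝ) : ℂ) ∂μ = ((∫ x, f x ∂μ : ℝ) : ℂ) :=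
  integral_ofReal

lemma Integrable.complex_ofReal {α : Type*} [MeasurableSpace α] {μ : Measure α} {f : α → ℝ}
    (hf : Integrable f μ) : Integrable (fun x => ((f x : ℝ) : ℂ)) μ :=
  hf.ofReal

lemma norm_cexp_neg_I_mul (s : ℝ) : ‖Complex.exp (-Complex.I * (s:ℂ))‖ = 1 := by
  rw [Complex.norm_exp]
  simp

lemma setOf_sq_lt {ρ : ℝ} (hρ : 0 < ρ) : {t : ℝ | 0 < ρ^2 - t^2} = Ioo (-ρ) ρ := by
  ext t
  simp only [mem_setOf_eq, mem_Ioo]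
  constructor
  · intro h
    constructor <;> nlinarith
  · rintro ⟨h1, h2⟩
    nlinarith

lemma main_prod_integrable (m : ℕ) (ρ k : ℝ) (hρ : 0 < ρ) :
    Integrable (fun q : ℝ × EuclideanSpace ℝ (Fin (2*m+1)) =>
      ((1 / Real.sqrt (ρ^2 - q.1^2 - ‖q.2‖^2) : ℝ) : ℂ) *
        Complex.exp (-Complex.I * ((k * q.1 : ℝ) : ℂ)))
      ((volume : Measure ℝ).prod volume) := by
  have hmeas : AEStronglyMeasurable
      (fun q : ℝ × EuclideanSpace ℝ (Fin (2*m+1)) =>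
        ((1 / Real.sqrt (ρ^2 - q.1^2 - ‖q.2‖^2) : ℝ) : ℂ) *
          Complex.exp (-Complex.I * ((k * q.1 : ℝ) : ℂ)))
      ((volume : Measure ℝ).prod volume) := by
    apply Measurable.aestronglyMeasurable
    apply Measurable.mul
    · apply Complex.measurable_ofReal.comp
      simp_rw [one_div]
      exact ((Real.continuous_sqrt.comp (((continuous_const.sub
        ((continuous_fst.pow 2))).sub
          ((continuous_norm.comp continuous_snd).pow 2)))).measurable).inv
    · apply Continuous.measurable
      exact Complex.continuous_exp.comp (by continuity)
  rw [integrable_prod_iff hmeas]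
  constructor
  · apply ae_of_all
    intro t
    have := (Integrable.complex_ofReal (slice_integrable (2*m) (ρ^2 - t^2))).mul_const
      (Complex.exp (-Complex.I * ((k * t : ℝ) : ℂ)))
    simpa using this
  · have hval : (fun t : ℝ => ∫ y : EuclideanSpace ℝ (Fin (2*m+1)),
        ‖((1 / Real.sqrt (ρ^2 - t^2 - ‖y‖^2) : ℝ) : ℂ) *
          Complex.exp (-Complex.I * ((k * t : ℝ) : ℂ))‖) =
        fun t => Set.indicator (Ioo (-ρ) ρ)
          (fun s => Real.pi * unitBallVol (2*m) * (Real.sqrt (ρ^2 - s^2))^(2*m)) t := by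
      funext t
      have h1 : ∀ y : EuclideanSpace ℝ (Fin (2*m+1)),
          ‖((1 / Real.sqrt (ρ^2 - t^2 - ‖y‖^2) : ℝ) : ℂ) *
            Complex.exp (-Complex.I * ((k * t : ℝ) : ℂ))‖ =
          1 / Real.sqrt ((ρ^2 - t^2) - ‖y‖^2) := by
        intro y
        rw [norm_mul, norm_cexp_neg_I_mul, mul_one, Complex.norm_real, Real.norm_eq_abs,
          abs_of_nonneg (by positivity)]
      simp_rw [h1]
      rw [slice_integral (2*m) (ρ^2 - t^2)]
      by_cases ht : 0 < ρ^2 - t^2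
      · rw [if_pos ht, Set.indicator_of_mem]
        rw [← setOf_sq_lt hρ]; exact ht
      · rw [if_neg ht, Set.indicator_of_notMem]
        rw [← setOf_sq_lt hρ]; exact ht
    rw [hval]
    rw [integrable_indicator_iff measurableSet_Ioo]
    exact (ContinuousOn.integrableOn_compact isCompact_Icc
      (Continuous.continuousOn (by continuity))).mono_set Ioo_subset_Icc_self

lemma main_integrable (m : ℕ) (ρ k : ℝ) (hρ : 0 < ρ) :
    Integrable (fun x : EuclideanSpace ℝ (Fin (2*m+1+1)) =>
      ((1 / Real.sqrt (ρ^2 - ‖x‖^2) : ℝ) : ℂ) *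
        Complex.exp (-Complex.I * ((k * x 0 : ℝ) : ℂ))) := by
  have hsymm : MeasurePreserving ((splitE (2*m+1)).symm) volume volume :=
    MeasurePreserving.symm _ (splitE_mp (2*m+1))
  have hcomp := (hsymm.integrable_comp_emb (MeasurableEquiv.measurableEmbedding _)
    (g := fun x : EuclideanSpace ℝ (Fin (2*m+1+1)) =>
      ((1 / Real.sqrt (ρ^2 - ‖x‖^2) : ℝ) : ℂ) *
        Complex.exp (-Complex.I * ((k * x 0 : ℝ) : ℂ))))
  rw [← hcomp]
  have heq : ((fun x : EuclideanSpace ℝ (Fin (2*m+1+1)) =>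
      ((1 / Real.sqrt (ρ^2 - ‖x‖^2) : ℝ) : ℂ) *
        Complex.exp (-Complex.I * ((k * x 0 : ℝ) : ℂ))) ∘ (splitE (2*m+1)).symm) =
      fun q : ℝ × EuclideanSpace ℝ (Fin (2*m+1)) =>
        ((1 / Real.sqrt (ρ^2 - q.1^2 - ‖q.2‖^2) : ℝ) : ℂ) *
          Complex.exp (-Complex.I * ((k * q.1 : ℝ) : ℂ)) := by
    funext q
    simp only [Function.comp_apply]
    rw [splitE_symm_normsq, splitE_symm_zero]
    ring_nf
  rw [heq, Measure.volume_eq_prod]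
  exact main_prod_integrable m ρ k hρ

lemma main_slice (m : ℕ) (ρ k : ℝ) (hρ : 0 < ρ) :
    ∫ x : EuclideanSpace ℝ (Fin (2*m+1+1)),
      ((1 / Real.sqrt (ρ^2 - ‖x‖^2) : ℝ) : ℂ) *
        Complex.exp (-Complex.I * ((k * x 0 : ℝ) : ℂ)) =
    ((Real.pi * unitBallVol (2*m) : ℝ) : ℂ) *
      ∫ t in (-ρ)..ρ, (((ρ^2 - t^2)^m : ℝ) : ℂ) *
        Complex.exp (-Complex.I * ((k * t : ℝ) : ℂ)) := by
  have hsymm : MeasurePreserving ((splitE (2*m+1)).symm) volume volume :=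
    MeasurePreserving.symm _ (splitE_mp (2*m+1))
  rw [← hsymm.integral_comp (MeasurableEquiv.measurableEmbedding _)]
  have heq : ∀ q : ℝ × EuclideanSpace ℝ (Fin (2*m+1)),
      ((1 / Real.sqrt (ρ^2 - ‖(splitE (2*m+1)).symm q‖^2) : ℝ) : ℂ) *
        Complex.exp (-Complex.I * ((k * ((splitE (2*m+1)).symm q) 0 : ℝ) : ℂ)) =
      ((1 / Real.sqrt (ρ^2 - q.1^2 - ‖q.2‖^2) : ℝ) : ℂ) *
        Complex.exp (-Complex.I * ((k * q.1 : ℝ) : ℂ)) := by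
    intro q
    rw [splitE_symm_normsq, splitE_symm_zero]
    ring_nf
  rw [show (fun q : ℝ × EuclideanSpace ℝ (Fin (2*m+1)) =>
      ((1 / Real.sqrt (ρ^2 - ‖(splitE (2*m+1)).symm q‖^2) : ℝ) : ℂ) *
        Complex.exp (-Complex.I * ((k * ((splitE (2*m+1)).symm q) 0 : ℝ) : ℂ))) =
      fun q : ℝ × EuclideanSpace ℝ (Fin (2*m+1)) =>
        ((1 / Real.sqrt (ρ^2 - q.1^2 - ‖q.2‖^2) : ℝ) : ℂ) *
          Complex.exp (-Complex.I * ((k * q.1 : ℝ) : ℂ)) from funext heq]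
  have hint := main_prod_integrable m ρ k hρ
  rw [Measure.volume_eq_prod]
  rw [integral_prod _ hint]
  have hin : ∀ t : ℝ,
      (∫ y : EuclideanSpace ℝ (Fin (2*m+1)),
        ((1 / Real.sqrt (ρ^2 - t^2 - ‖y‖^2) : ℝ) : ℂ) *
          Complex.exp (-Complex.I * ((k * t : ℝ) : ℂ))) =
      ((Set.indicator (Ioo (-ρ) ρ)
        (fun s => Real.pi * unitBallVol (2*m) * (Real.sqrt (ρ^2 - s^2))^(2*m)) t : ℝ) : ℂ) *
        Complex.exp (-Complex.I * ((k * t : ℝ) : ℂ)) := by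
    intro t
    rw [MeasureTheory.integral_mul_const, integral_complex_ofReal]
    congr 2
    rw [slice_integral (2*m) (ρ^2 - t^2)]
    by_cases ht : 0 < ρ^2 - t^2
    · rw [if_pos ht, Set.indicator_of_mem]
      rw [← setOf_sq_lt hρ]; exact ht
    · rw [if_neg ht, Set.indicator_of_notMem]
      rw [← setOf_sq_lt hρ]; exact ht
  simp_rw [hin]
  have hvanish : ∀ t ∉ Ioo (-ρ) ρ,
      ((Set.indicator (Ioo (-ρ) ρ)
        (fun s => Real.pi * unitBallVol (2*m) * (Real.sqrt (ρ^2 - s^2))^(2*m)) t : ℝ) : ℂ) *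
        Complex.exp (-Complex.I * ((k * t : ℝ) : ℂ)) = 0 := by
    intro t ht
    rw [Set.indicator_of_notMem ht]
    simp
  rw [← setIntegral_eq_integral_of_forall_compl_eq_zero hvanish]
  rw [← integral_Ioc_eq_integral_Ioo, ← intervalIntegral.integral_of_le (by linarith)]
  rw [← intervalIntegral.integral_const_mul]
  apply intervalIntegral.integral_congr_ae
  have hne : ∀ᵐ t : ℝ, t ≠ ρ := by
    rw [MeasureTheory.ae_iff]
    simp only [Classical.not_not, setOf_eq_eq_singleton]
    exact measure_singleton (α := ℝ) ρ
  filter_upwards [hne] with t htne ht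
  rw [Set.uIoc_of_le (by linarith : -ρ ≤ ρ)] at ht
  have htIoo : t ∈ Ioo (-ρ) ρ := ⟨ht.1, lt_of_le_of_ne ht.2 htne⟩
  rw [Set.indicator_of_mem htIoo]
  have h0 : (0:ℝ) ≤ ρ^2 - t^2 := by
    obtain ⟨h1, h2⟩ := htIoo; nlinarith
  rw [pow_mul, Real.sq_sqrt h0]
  push_cast
  ring

/-- Rotation: integral of a radial profile times a character depends only on `‖ξ‖`. -/
lemma rot (N : ℕ) (W : ℝ → ℝ) (ξ : EuclideanSpace ℝ (Fin (N+1))) :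
    ∫ x : EuclideanSpace ℝ (Fin (N+1)),
      ((W ‖x‖ : ℝ) : ℂ) * Complex.exp (-Complex.I * ((inner ℝ ξ x : ℝ) : ℂ)) =
    ∫ x : EuclideanSpace ℝ (Fin (N+1)),
      ((W ‖x‖ : ℝ) : ℂ) * Complex.exp (-Complex.I * ((‖ξ‖ * x 0 : ℝ) : ℂ)) := by
  set k := ‖ξ‖ with hk
  set ξ₀ : EuclideanSpace ℝ (Fin (N+1)) := k • EuclideanSpace.single 0 (1:ℝ) with hξ₀
  have hnorm : ‖ξ‖ = ‖ξ₀‖ := by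
    rw [hξ₀, norm_smul, EuclideanSpace.norm_single]
    simp [hk, abs_of_nonneg (norm_nonneg ξ)]
  set e := Submodule.reflection (Submodule.span ℝ {ξ - ξ₀})ᗮ with he
  have hmap : e ξ = ξ₀ := Submodule.reflection_sub hnorm
  have hmp : MeasurePreserving e volume volume :=
    LinearIsometryEquiv.measurePreserving (Submodule.reflection (Submodule.span ℝ {ξ - ξ₀})ᗮ)
  rw [← hmp.integral_comp (e.toHomeomorph.measurableEmbedding)]
  congr 1
  funext x
  have h1 : ‖e x‖ = ‖x‖ := e.norm_map x
  have h2 : (inner ℝ ξ (e x) : ℝ) = k * x 0 := by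
    have hinv : e (e x) = x := Submodule.reflection_reflection _ x
    have : (inner ℝ (e ξ) (e (e x)) : ℝ) = (inner ℝ ξ (e x) : ℝ) :=
      e.inner_map_map ξ (e x)
    rw [← this, hinv, hmap, hξ₀]
    rw [real_inner_smul_left, EuclideanSpace.inner_single_left]
    simp
  rw [h1, h2]

noncomputable def hFun (j : ℕ) (k ρ : ℝ) : ℂ :=
  ∫ u in (-1:ℝ)..1, ((1 - (u:ℂ)^2)^j) * Complex.exp (-Complex.I * k * ρ * u)

noncomputable def hDer (j : ℕ) (k ρ : ℝ) : ℂ :=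
  ∫ u in (-1:ℝ)..1, ((1 - (u:ℂ)^2)^j) * (-Complex.I * k * u) *
    Complex.exp (-Complex.I * k * ρ * u)

noncomputable def GFun (j : ℕ) (k : ℝ) : ℝ → ℂ :=
  fun ρ => ((ρ:ℂ))^(2*j+1) * hFun j k ρ

lemma hasDerivAt_coe (ρ : ℝ) : HasDerivAt (fun r : ℝ => ((r : ℂ))) 1 ρ := by
  exact Complex.ofRealCLM.hasDerivAt (x := ρ)

lemma norm_cexp_I_real (z : ℂ) (hz : z.re = 0) : ‖Complex.exp z‖ = 1 := by
  rw [Complex.norm_exp, hz, Real.exp_zero]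

lemma re_exponent (k ρ u : ℝ) : (-Complex.I * k * ρ * u).re = 0 := by
  simp

lemma norm_one_sub_sq_pow_le {u : ℝ} (hu : u ∈ Set.uIoc (-1:ℝ) 1) (j : ℕ) :
    ‖(1 - (u:ℂ)^2)^j‖ ≤ 1 := by
  rw [Set.uIoc_of_le (by norm_num : (-1:ℝ) ≤ 1)] at hu
  have h1 : ((1:ℂ) - (u:ℂ)^2) = ((1 - u^2 : ℝ) : ℂ) := by push_cast; ring
  rw [norm_pow, h1, Complex.norm_real, Real.norm_eq_abs]
  have h2 : |1 - u^2| ≤ 1 := by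
    rw [abs_le]
    constructor <;> nlinarith [hu.1, hu.2]
  calc |1 - u^2| ^ j ≤ 1 ^ j := pow_le_pow_left₀ (abs_nonneg _) h2 j
    _ = 1 := one_pow j

lemma hFun_bound (j : ℕ) (k ρ : ℝ) : ‖hFun j k ρ‖ ≤ 2 := by
  have := intervalIntegral.norm_integral_le_of_norm_le_const
    (C := 1) (a := (-1:ℝ)) (b := 1)
    (f := fun u : ℝ => ((1 - (u:ℂ)^2)^j) * Complex.exp (-Complex.I * k * ρ * u))
    (fun u hu => by
      rw [norm_mul, norm_cexp_I_real _ (re_exponent k ρ u), mul_one]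
      exact norm_one_sub_sq_pow_le hu j)
  rw [hFun]
  calc ‖∫ u in (-1:ℝ)..1, ((1 - (u:ℂ)^2)^j) * Complex.exp (-Complex.I * k * ρ * u)‖
      ≤ 1 * |1 - (-1:ℝ)| := this
    _ = 2 := by norm_num

lemma continuous_integrand (j : ℕ) (k ρ : ℝ) :
    Continuous (fun u : ℝ => ((1 - (u:ℂ)^2)^j) * Complex.exp (-Complex.I * k * ρ * u)) := by
  apply Continuous.mul
  · continuity
  · exact Complex.continuous_exp.comp (by continuity)

lemma continuous_der_integrand (j : ℕ) (k ρ : ℝ) :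
    Continuous (fun u : ℝ => ((1 - (u:ℂ)^2)^j) * (-Complex.I * k * u) *
      Complex.exp (-Complex.I * k * ρ * u)) := by
  apply Continuous.mul
  · continuity
  · exact Complex.continuous_exp.comp (by continuity)

lemma hasDerivAt_hFun (j : ℕ) (k ρ : ℝ) :
    HasDerivAt (fun r => hFun j k r) (hDer j k ρ) ρ := by
  have key := intervalIntegral.hasDerivAt_integral_of_dominated_loc_of_deriv_le
    (F := fun (r : ℝ) (u : ℝ) => ((1 - (u:ℂ)^2)^j) * Complex.exp (-Complex.I * k * r * u))
    (F' := fun (r : ℝ) (u : ℝ) => ((1 - (u:ℂ)^2)^j) * (-Complex.I * k * u) *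
      Complex.exp (-Complex.I * k * r * u))
    (x₀ := ρ) (a := (-1:ℝ)) (b := 1) (μ := volume)
    (bound := fun _ => |k|) (s := ball ρ 1) (ball_mem_nhds ρ one_pos)
    (Filter.Eventually.of_forall fun r =>
      ((continuous_integrand j k r).aestronglyMeasurable).restrict)
    ((continuous_integrand j k ρ).intervalIntegrable _ _)
    ((continuous_der_integrand j k ρ).aestronglyMeasurable).restrict
    ?_ (intervalIntegrable_const) ?_
  · exact key.2
  · apply ae_of_all
    intro u hu r _
    rw [norm_mul, norm_cexp_I_real _ (by simp), mul_one, norm_mul]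
    have h1 : ‖-Complex.I * (k:ℂ) * (u:ℂ)‖ = |k| * |u| := by
      rw [norm_mul, norm_mul]
      simp [Complex.norm_real, Real.norm_eq_abs]
    rw [h1]
    have h2 : |u| ≤ 1 := by
      rw [Set.uIoc_of_le (by norm_num : (-1:ℝ) ≤ 1)] at hu
      rw [abs_le]; exact ⟨hu.1.le, hu.2⟩
    calc ‖(1 - (u:ℂ)^2)^j‖ * (|k| * |u|) ≤ 1 * (|k| * 1) := by
          apply mul_le_mul (norm_one_sub_sq_pow_le hu j)
            (by apply mul_le_mul_of_nonneg_left h2 (abs_nonneg k)) (by positivity) one_pos.le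
      _ = |k| := by ring
  · apply ae_of_all
    intro u _ r _
    have hlin : HasDerivAt (fun z : ℂ => -Complex.I * k * z * u)
        (-Complex.I * k * u) (r : ℂ) := by
      have h := ((hasDerivAt_id ((r:ℝ) : ℂ)).const_mul (-Complex.I * (k:ℂ))).mul_const ((u:ℂ))
      refine h.congr_deriv ?_
      symm
      ring
    have hz := (hlin.cexp).const_mul ((1 - (u:ℂ)^2)^j)
    have hfin := hz.comp_ofReal
    refine hfin.congr_deriv ?_
    symm
    ring

lemma hFun_symm (j : ℕ) (k ρ : ℝ) : hFun j k ρ = hFun j ρ k := by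
  unfold hFun
  apply intervalIntegral.integral_congr
  intro u _
  congr 2
  ring

lemma continuous_hFun_k (j : ℕ) (ρ : ℝ) : Continuous (fun k => hFun j k ρ) := by
  have : (fun k => hFun j k ρ) = fun k => hFun j ρ k := by
    funext k; exact hFun_symm j k ρ
  rw [this]
  rw [continuous_iff_continuousAt]
  intro k
  exact (hasDerivAt_hFun j ρ k).continuousAt

lemma rho_hDer (j : ℕ) (k ρ : ℝ) :
    (ρ:ℂ) * hDer (j+1) k ρ =
      2*((j:ℂ)+1) * hFun j k ρ - (2*(j:ℂ)+3) * hFun (j+1) k ρ := by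
  set c : ℂ := -Complex.I * k * ρ with hc
  -- FTC for d/du [(1-u^2)^(j+1) * u * exp(c u)]
  have hder : ∀ u : ℝ, HasDerivAt
      (fun u : ℝ => (1 - (u:ℂ)^2)^(j+1) * u * Complex.exp (-Complex.I * k * ρ * u))
      ((((j:ℂ)+1) * (1 - (u:ℂ)^2)^j * (-(2*u)) * u + (1 - (u:ℂ)^2)^(j+1)) *
          Complex.exp (-Complex.I * k * ρ * u) +
        (1 - (u:ℂ)^2)^(j+1) * u * ((-Complex.I * k * ρ) *
          Complex.exp (-Complex.I * k * ρ * u))) u := by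
    intro u
    have hid := hasDerivAt_id ((u:ℝ) : ℂ)
    have hsq : HasDerivAt (fun z : ℂ => 1 - z^2) (-(2*(u:ℂ))) ((u:ℝ) : ℂ) := by
      have := (hasDerivAt_pow 2 ((u:ℝ):ℂ)).const_sub 1
      refine this.congr_deriv ?_
      symm
      norm_num
    have hpow : HasDerivAt (fun z : ℂ => (1 - z^2)^(j+1))
        (((j:ℂ)+1) * (1 - (u:ℂ)^2)^j * (-(2*(u:ℂ)))) ((u:ℝ):ℂ) := by
      have := hsq.pow (j+1)
      simp only [Nat.add_sub_cancel] at this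
      refine this.congr_deriv ?_
      symm
      push_cast
      ring
    have hP : HasDerivAt (fun z : ℂ => (1 - z^2)^(j+1) * z)
        ((((j:ℂ)+1) * (1 - (u:ℂ)^2)^j * (-(2*(u:ℂ)))) * (u:ℂ) + (1 - (u:ℂ)^2)^(j+1) * 1)
        ((u:ℝ):ℂ) :=
      hpow.mul hid
    have hE : HasDerivAt (fun z : ℂ => Complex.exp (-Complex.I * k * ρ * z))
        ((-Complex.I * k * ρ) * Complex.exp (-Complex.I * k * ρ * (u:ℂ))) ((u:ℝ):ℂ) := by
      have h2 := ((hid.const_mul (-Complex.I * (k:ℂ) * (ρ:ℂ))).cexp)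
      simp only [id_eq] at h2
      refine h2.congr_deriv ?_
      symm
      ring
    have hz := hP.mul hE
    have hfin := hz.comp_ofReal
    refine hfin.congr_deriv ?_
    symm
    ring
  have hFTC := intervalIntegral.integral_eq_sub_of_hasDerivAt
    (a := (-1:ℝ)) (b := (1:ℝ))
    (f := fun u : ℝ => (1 - (u:ℂ)^2)^(j+1) * u * Complex.exp (-Complex.I * k * ρ * u))
    (fun u _ => hder u)
    (by
      apply Continuous.intervalIntegrable
      apply Continuous.add
      · apply Continuous.mul
        · continuity
        · exact Complex.continuous_exp.comp (by continuity)
      · apply Continuous.mul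
        · continuity
        · exact continuous_const.mul (Complex.continuous_exp.comp (by continuity)))
  have hzero : (∫ u in (-1:ℝ)..1,
      ((((j:ℂ)+1) * (1 - (u:ℂ)^2)^j * (-(2*u)) * u + (1 - (u:ℂ)^2)^(j+1)) *
          Complex.exp (-Complex.I * k * ρ * u) +
        (1 - (u:ℂ)^2)^(j+1) * u * ((-Complex.I * k * ρ) *
          Complex.exp (-Complex.I * k * ρ * u)))) = 0 := by
    rw [hFTC]
    norm_num
  -- rewrite the integrand as a linear combination
  have hsplit : (fun u : ℝ =>
      ((((j:ℂ)+1) * (1 - (u:ℂ)^2)^j * (-(2*u)) * u + (1 - (u:ℂ)^2)^(j+1)) *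
          Complex.exp (-Complex.I * k * ρ * u) +
        (1 - (u:ℂ)^2)^(j+1) * u * ((-Complex.I * k * ρ) *
          Complex.exp (-Complex.I * k * ρ * u)))) = fun u : ℝ =>
      ((2*(j:ℂ)+3) * ((1 - (u:ℂ)^2)^(j+1) * Complex.exp (-Complex.I * k * ρ * u)) -
        2*((j:ℂ)+1) * ((1 - (u:ℂ)^2)^j * Complex.exp (-Complex.I * k * ρ * u))) +
      (ρ:ℂ) * ((1 - (u:ℂ)^2)^(j+1) * (-Complex.I * k * u) *
        Complex.exp (-Complex.I * k * ρ * u)) := by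
    funext u
    ring
  rw [hsplit] at hzero
  rw [intervalIntegral.integral_add, intervalIntegral.integral_sub,
    intervalIntegral.integral_const_mul, intervalIntegral.integral_const_mul,
    intervalIntegral.integral_const_mul] at hzero
  · have h1 : (2*(j:ℂ)+3) * hFun (j+1) k ρ - 2*((j:ℂ)+1) * hFun j k ρ +
        (ρ:ℂ) * hDer (j+1) k ρ = 0 := by
      rw [hFun, hFun, hDer]
      exact hzero
    linear_combination h1
  · exact (continuous_const.mul (continuous_integrand (j+1) k ρ)).intervalIntegrable _ _
  · exact (continuous_const.mul (continuous_integrand j k ρ)).intervalIntegrable _ _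
  · apply IntervalIntegrable.sub
    · exact (continuous_const.mul (continuous_integrand (j+1) k ρ)).intervalIntegrable _ _
    · exact (continuous_const.mul (continuous_integrand j k ρ)).intervalIntegrable _ _
  · exact (continuous_const.mul (continuous_der_integrand (j+1) k ρ)).intervalIntegrable _ _

lemma hasDerivAt_GFun (j : ℕ) (k ρ : ℝ) :
    HasDerivAt (GFun (j+1) k) ((2*(j:ℂ)+2) * (ρ:ℂ) * GFun j k ρ) ρ := by
  have hpow := (hasDerivAt_pow (2*(j+1)+1) ((ρ:ℝ):ℂ)).comp_ofReal
  simp only [show 2*(j+1)+1-1 = 2*j+2 from by omega] at hpow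
  have hG := hpow.mul (hasDerivAt_hFun (j+1) k ρ)
  have : GFun (j+1) k = fun r : ℝ => ((r:ℂ))^(2*(j+1)+1) * hFun (j+1) k r := rfl
  rw [this]
  refine hG.congr_deriv ?_
  symm
  have hr := rho_hDer j k ρ
  rw [GFun]
  push_cast
  linear_combination (-(ρ:ℂ)^(2*j+2)) * hr

/-! ### Bridge: interval integral to GFun -/

lemma interval_to_G (m : ℕ) (k ρ : ℝ) (hρ : ρ ≠ 0) :
    (∫ t in (-ρ)..ρ, (((ρ^2 - t^2)^m : ℝ) : ℂ) *
        Complex.exp (-Complex.I * ((k*t : ℝ) : ℂ)))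
      = GFun m k ρ := by
  have hsub := intervalIntegral.integral_comp_mul_left
    (a := (-1:ℝ)) (b := 1) (c := ρ)
    (f := fun t : ℝ => (((ρ^2 - t^2)^m : ℝ) : ℂ) *
      Complex.exp (-Complex.I * ((k*t : ℝ) : ℂ))) hρ
  rw [show ρ * (-1:ℝ) = -ρ by ring, show ρ * (1:ℝ) = ρ by ring] at hsub
  have h5 : (∫ t in (-ρ)..ρ, (((ρ^2 - t^2)^m : ℝ) : ℂ) *
      Complex.exp (-Complex.I * ((k*t : ℝ) : ℂ)))
      = ρ • ∫ u in (-1:ℝ)..1, (((ρ^2 - (ρ*u)^2)^m : ℝ) : ℂ) *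
        Complex.exp (-Complex.I * ((k*(ρ*u) : ℝ) : ℂ)) := by
    calc (∫ t in (-ρ)..ρ, (((ρ^2 - t^2)^m : ℝ) : ℂ) *
        Complex.exp (-Complex.I * ((k*t : ℝ) : ℂ)))
        = ρ • (ρ⁻¹ • ∫ t in (-ρ)..ρ, (((ρ^2 - t^2)^m : ℝ) : ℂ) *
            Complex.exp (-Complex.I * ((k*t : ℝ) : ℂ))) := by
          rw [smul_smul, mul_inv_cancel₀ hρ, one_smul]
      _ = ρ • ∫ u in (-1:ℝ)..1, (((ρ^2 - (ρ*u)^2)^m : ℝ) : ℂ) *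
            Complex.exp (-Complex.I * ((k*(ρ*u) : ℝ) : ℂ)) :=
          congrArg (fun z => ρ • z) hsub.symm
  rw [h5]
  have hfe : (fun u : ℝ => (((ρ^2 - (ρ*u)^2)^m : ℝ) : ℂ) *
      Complex.exp (-Complex.I * ((k*(ρ*u) : ℝ) : ℂ)))
      = fun u : ℝ => (ρ:ℂ)^(2*m) *
        (((1 - (u:ℂ)^2)^m) * Complex.exp (-Complex.I * k * ρ * u)) := by
    funext u
    have harg : -Complex.I * ((k*(ρ*u) : ℝ) : ℂ) = -Complex.I * k * ρ * u := by
      push_cast; ring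
    rw [harg]
    have hbase : ((ρ^2 - (ρ*u)^2 : ℝ) : ℂ) = (ρ:ℂ)^2 * (1 - (u:ℂ)^2) := by
      push_cast; ring
    rw [Complex.ofReal_pow, hbase, mul_pow, ← pow_mul]
    ring
  have h4 : (∫ u in (-1:ℝ)..1, (((ρ^2 - (ρ*u)^2)^m : ℝ) : ℂ) *
      Complex.exp (-Complex.I * ((k*(ρ*u) : ℝ) : ℂ)))
      = (ρ:ℂ)^(2*m) * hFun m k ρ := by
    rw [hfe, intervalIntegral.integral_const_mul]
    rfl
  rw [h4, GFun, Complex.real_smul]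
  ring

/-! ### Value of GFun 0 -/

lemma final_pointwise (k R : ℝ) (hR : 0 < R) (hk0 : k ≠ 0) :
    (1/2 : ℂ) * GFun 0 k R = ((Real.sin (R*k)/k : ℝ) : ℂ) := by
  set c : ℂ := -Complex.I * (k:ℂ) * (R:ℂ) with hc
  have hcne : c ≠ 0 := by
    apply mul_ne_zero (mul_ne_zero _ (Complex.ofReal_ne_zero.2 hk0))
      (Complex.ofReal_ne_zero.2 hR.ne')
    simpa using Complex.I_ne_zero
  have hder : ∀ u : ℝ, HasDerivAt (fun u : ℝ => c⁻¹ * Complex.exp (c * u))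
      (Complex.exp (c * u)) u := by
    intro u
    have h := (((hasDerivAt_id ((u:ℝ):ℂ)).const_mul c).cexp).const_mul c⁻¹
    simp only [id_eq, mul_one] at h
    have h2 := h.comp_ofReal
    convert h2 using 1
    field_simp
  have hFTC := intervalIntegral.integral_eq_sub_of_hasDerivAt (a := (-1:ℝ)) (b := 1)
    (fun u _ => hder u)
    ((Complex.continuous_exp.comp (by continuity)).intervalIntegrable _ _)
  have hh : hFun 0 k R = c⁻¹ * Complex.exp c - c⁻¹ * Complex.exp (-c) := by
    rw [hFun]
    simp only [pow_zero, one_mul]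
    rw [hFTC]
    norm_num
  have hsin : Complex.exp c - Complex.exp (-c) = -2 * (Real.sin (k*R) : ℝ) * Complex.I := by
    have hc_eq : c = ((-(k*R) : ℝ) : ℂ) * Complex.I := by rw [hc]; push_cast; ring
    have hc_neg : -c = (((k*R) : ℝ) : ℂ) * Complex.I := by rw [hc]; push_cast; ring
    rw [hc_neg, hc_eq, Complex.exp_mul_I, Complex.exp_mul_I]
    rw [Complex.ofReal_sin]
    push_cast
    rw [Complex.cos_neg, Complex.sin_neg]
    ring
  rw [GFun, hh]
  have : c⁻¹ * Complex.exp c - c⁻¹ * Complex.exp (-c)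
      = c⁻¹ * (Complex.exp c - Complex.exp (-c)) := by ring
  rw [this, hsin]
  rw [show R * k = k * R from mul_comm R k, Complex.ofReal_div, Complex.ofReal_sin]
  have hkne : (k:ℂ) ≠ 0 := Complex.ofReal_ne_zero.2 hk0
  have hRne : (R:ℂ) ≠ 0 := Complex.ofReal_ne_zero.2 hR.ne'
  have hcinv : c⁻¹ = Complex.I / ((k:ℂ)*(R:ℂ)) := inv_eq_of_mul_eq_one_right (by
    rw [hc]
    field_simp
    linear_combination (-1:ℂ) * Complex.I_mul_I)
  rw [hcinv]
  push_cast
  field_simp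
  linear_combination (-Complex.sin ((R:ℂ)*(k:ℂ))) * Complex.I_mul_I

lemma GFun_zero_freq (R : ℝ) : (1/2 : ℂ) * GFun 0 0 R = (R:ℂ) := by
  rw [GFun, hFun]
  have : ∀ u : ℝ, ((1 - (u:ℂ)^2)^(0:ℕ)) * Complex.exp (-Complex.I * (0:ℝ) * R * u)
      = 1 := by
    intro u
    simp
  simp only [this]
  rw [intervalIntegral.integral_const]
  norm_num
  ring

/-! ### Iteration machinery -/

lemma iterate_congr {f g : ℝ → ℂ} {U : Set ℝ} (hU : IsOpen U) (h : Set.EqOn f g U) :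
    ∀ i, Set.EqOn (invRDerivC^[i] f) (invRDerivC^[i] g) U := by
  intro i
  induction i with
  | zero => simpa using h
  | succ i ih =>
    intro ρ hρ
    rw [Function.iterate_succ_apply', Function.iterate_succ_apply']
    show deriv (invRDerivC^[i] f) ρ / ρ = deriv (invRDerivC^[i] g) ρ / ρ
    congr 1
    apply Filter.EventuallyEq.deriv_eq
    exact Filter.eventuallyEq_of_mem (hU.mem_nhds hρ) ih

lemma iter_general (F : ℕ → ℝ → ℂ)
    (hF : ∀ (j : ℕ) (ρ : ℝ), HasDerivAt (F (j+1)) ((2*(j:ℂ)+2) * (ρ:ℂ) * F j ρ) ρ) :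
    ∀ (i j : ℕ) (ρ : ℝ), ρ ≠ 0 →
      invRDerivC^[i] (F (j+i)) ρ
        = ((2^i * (j+i).factorial / j.factorial : ℝ) : ℂ) * F j ρ := by
  intro i
  induction i with
  | zero =>
    intro j ρ _
    simp only [Function.iterate_zero, id_eq, Nat.add_zero, pow_zero, one_mul]
    rw [div_self (by exact_mod_cast Nat.factorial_ne_zero j), Complex.ofReal_one, one_mul]
  | succ i ih =>
    intro j ρ hρ
    rw [show j + (i+1) = j+1+i from by omega]
    rw [Function.iterate_succ_apply']
    show deriv (invRDerivC^[i] (F (j+1+i))) ρ / ρ = _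
    have heq : Set.EqOn (invRDerivC^[i] (F ((j+1)+i)))
        (fun r => ((2^i * ((j+1)+i).factorial / (j+1).factorial : ℝ) : ℂ) * F (j+1) r)
        {(0:ℝ)}ᶜ := by
      intro r hr
      exact ih (j+1) r hr
    have hd : deriv (invRDerivC^[i] (F ((j+1)+i))) ρ
        = deriv (fun r => ((2^i * ((j+1)+i).factorial / (j+1).factorial : ℝ) : ℂ)
            * F (j+1) r) ρ := by
      apply Filter.EventuallyEq.deriv_eq
      exact Filter.eventuallyEq_of_mem (isOpen_compl_singleton.mem_nhds hρ) heq
    rw [hd]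
    have hder := (hF j ρ).const_mul
      (((2^i * ((j+1)+i).factorial / (j+1).factorial : ℝ) : ℂ))
    rw [hder.deriv]
    have hfact : ((2:ℝ)^i * ((j+1)+i).factorial / (j+1).factorial) * (2*(j:ℝ)+2)
        = 2^(i+1) * (j+1+i).factorial / j.factorial := by
      rw [Nat.factorial_succ]
      have h1 : ((j:ℝ)+1) ≠ 0 := by positivity
      have h2 : ((j.factorial : ℝ)) ≠ 0 := by exact_mod_cast Nat.factorial_ne_zero j
      push_cast
      field_simp
      ring
    have hfc : (((2:ℝ)^i * ((j+1)+i).factorial / (j+1).factorial : ℝ) : ℂ) * (2*(j:ℂ)+2)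
        = ((2^(i+1) * (j+1+i).factorial / j.factorial : ℝ) : ℂ) := by
      rw [← hfact]
      push_cast
      ring
    rw [div_eq_iff (Complex.ofReal_ne_zero.2 hρ)]
    linear_combination ((ρ:ℂ) * F j ρ) * hfc

/-! ### Norm bound for GFun -/

lemma norm_GFun_le (j : ℕ) (k ρ : ℝ) : ‖GFun j k ρ‖ ≤ 2 * |ρ|^(2*j+1) := by
  rw [GFun, norm_mul, norm_pow, Complex.norm_real, Real.norm_eq_abs]
  calc |ρ|^(2*j+1) * ‖hFun j k ρ‖ ≤ |ρ|^(2*j+1) * 2 :=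
        mul_le_mul_of_nonneg_left (hFun_bound j k ρ) (by positivity)
    _ = 2 * |ρ|^(2*j+1) := by ring

lemma continuous_GFun_k (j : ℕ) (ρ : ℝ) : Continuous (fun k => GFun j k ρ) :=
  continuous_const.mul (continuous_hFun_k j ρ)

/-! ### Differentiation under the integral -/

lemma hasDerivAt_Phi {N : ℕ} (ψ : EuclideanSpace ℝ (Fin N) → ℂ)
    (hψ : Integrable ψ) (j : ℕ) (ρ : ℝ) :
    HasDerivAt (fun r => ∫ ξ, ψ ξ * GFun (j+1) ‖ξ‖ r)
      ((2*(j:ℂ)+2) * (ρ:ℂ) * ∫ ξ, ψ ξ * GFun j ‖ξ‖ ρ) ρ := by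
  have hbnd : ∀ (r : ℝ), r ∈ ball ρ 1 → ∀ ξ : EuclideanSpace ℝ (Fin N),
      ‖ψ ξ * ((2*(j:ℂ)+2) * (r:ℂ) * GFun j ‖ξ‖ r)‖
        ≤ (2*(j:ℝ)+2) * (2 * (|ρ|+1)^(2*j+2)) * ‖ψ ξ‖ := by
    intro r hr ξ
    have hrle : |r| ≤ |ρ| + 1 := by
      rw [mem_ball, Real.dist_eq] at hr
      have := abs_sub_abs_le_abs_sub r ρ
      linarith
    rw [norm_mul, norm_mul, norm_mul]
    have h1 : ‖(2*(j:ℂ)+2)‖ = 2*(j:ℝ)+2 := by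
      rw [show (2*(j:ℂ)+2) = ((2*(j:ℝ)+2 : ℝ) : ℂ) by push_cast; ring, Complex.norm_real,
        Real.norm_eq_abs, abs_of_nonneg (by positivity)]
    rw [h1, Complex.norm_real, Real.norm_eq_abs]
    have h2 : ‖GFun j ‖ξ‖ r‖ ≤ 2 * |r|^(2*j+1) := norm_GFun_le j _ r
    have h3 : |r| * ‖GFun j ‖ξ‖ r‖ ≤ 2 * (|ρ|+1)^(2*j+2) := by
      calc |r| * ‖GFun j ‖ξ‖ r‖ ≤ |r| * (2 * |r|^(2*j+1)) :=
            mul_le_mul_of_nonneg_left h2 (abs_nonneg r)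
        _ = 2 * |r|^(2*j+2) := by ring
        _ ≤ 2 * (|ρ|+1)^(2*j+2) := by
            have := pow_le_pow_left₀ (abs_nonneg r) hrle (2*j+2)
            linarith
    nlinarith [mul_le_mul_of_nonneg_left h3
      (mul_nonneg (by positivity : (0:ℝ) ≤ 2*(j:ℝ)+2) (norm_nonneg (ψ ξ)))]
  have key := hasDerivAt_integral_of_dominated_loc_of_deriv_le
    (F := fun (r : ℝ) (ξ : EuclideanSpace ℝ (Fin N)) => ψ ξ * GFun (j+1) ‖ξ‖ r)
    (F' := fun (r : ℝ) (ξ : EuclideanSpace ℝ (Fin N)) =>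
      ψ ξ * ((2*(j:ℂ)+2) * (r:ℂ) * GFun j ‖ξ‖ r))
    (x₀ := ρ) (s := ball ρ 1) (ball_mem_nhds ρ one_pos)
    (bound := fun ξ => (2*(j:ℝ)+2) * (2 * (|ρ|+1)^(2*j+2)) * ‖ψ ξ‖)
    (Filter.Eventually.of_forall fun r =>
      hψ.aestronglyMeasurable.mul
        (((continuous_GFun_k (j+1) r).comp continuous_norm).aestronglyMeasurable))
    ?_
    (hψ.aestronglyMeasurable.mul
      ((((continuous_GFun_k j ρ).comp continuous_norm).aestronglyMeasurable).const_mul _))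
    (ae_of_all _ fun ξ r hr => hbnd r hr ξ)
    ((hψ.norm.const_mul _))
    (ae_of_all _ fun ξ r _ => (hasDerivAt_GFun j ‖ξ‖ r).const_mul (ψ ξ))
  · have h6 : (∫ ξ, ψ ξ * ((2*(j:ℂ)+2) * (ρ:ℂ) * GFun j ‖ξ‖ ρ))
        = (2*(j:ℂ)+2) * (ρ:ℂ) * ∫ ξ, ψ ξ * GFun j ‖ξ‖ ρ := by
      rw [← MeasureTheory.integral_const_mul]
      congr 1
      funext ξ
      ring
    rw [← h6]
    exact key.2
  · -- integrability of F ρ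
    apply Integrable.mono' (hψ.norm.const_mul (2 * (|ρ|+1)^(2*(j+1)+1)))
    · exact hψ.aestronglyMeasurable.mul
        (((continuous_GFun_k (j+1) ρ).comp continuous_norm).aestronglyMeasurable)
    · apply ae_of_all
      intro ξ
      rw [norm_mul]
      have h2 : ‖GFun (j+1) ‖ξ‖ ρ‖ ≤ 2 * |ρ|^(2*(j+1)+1) := norm_GFun_le (j+1) _ ρ
      have h4 : |ρ|^(2*(j+1)+1) ≤ (|ρ|+1)^(2*(j+1)+1) :=
        pow_le_pow_left₀ (abs_nonneg ρ) (by linarith) _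
      calc ‖ψ ξ‖ * ‖GFun (j+1) ‖ξ‖ ρ‖ ≤ ‖ψ ξ‖ * (2 * (|ρ|+1)^(2*(j+1)+1)) := by
            apply mul_le_mul_of_nonneg_left _ (norm_nonneg _)
            calc ‖GFun (j+1) ‖ξ‖ ρ‖ ≤ 2 * |ρ|^(2*(j+1)+1) := h2
              _ ≤ 2 * (|ρ|+1)^(2*(j+1)+1) := by linarith
        _ = 2 * (|ρ|+1)^(2*(j+1)+1) * ‖ψ ξ‖ := by ring

/-! ### Volume ratio -/

lemma unitBallVol_even (m : ℕ) :
    unitBallVol (2*m) = Real.pi^m / (Nat.factorial m) := by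
  rcases Nat.eq_zero_or_pos m with hm | hm
  · subst hm
    have h0 : (volume : Measure (EuclideanSpace ℝ (Fin 0))) = Measure.dirac 0 :=
      volume_euclideanSpace_eq_dirac (Fin 0)
    have huniv : ball (0 : EuclideanSpace ℝ (Fin 0)) 1 = univ := by
      apply eq_univ_of_forall
      intro y
      simp [mem_ball, dist_zero_right, Subsingleton.elim y 0]
    simp [unitBallVol, huniv, h0, Nat.factorial]
  · have : Nonempty (Fin (2*m)) := by
      refine ⟨⟨0, by omega⟩⟩
    rw [unitBallVol, EuclideanSpace.volume_ball, ENNReal.toReal_mul]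
    simp only [Fintype.card_fin]
    have hΓpos : 0 < Real.Gamma (((2*m : ℕ) : ℝ)/2 + 1) :=
      Real.Gamma_pos_of_pos (by positivity)
    rw [ENNReal.ofReal_one, one_pow, ENNReal.toReal_one, one_mul]
    rw [ENNReal.toReal_ofReal (div_nonneg (by positivity) hΓpos.le)]
    have h1 : Real.sqrt Real.pi ^ (2*m) = Real.pi ^ m := by
      rw [pow_mul, Real.sq_sqrt Real.pi_pos.le]
    have h2 : ((2*m : ℕ) : ℝ)/2 + 1 = (m : ℝ) + 1 := by push_cast; ring
    rw [h1, h2, Real.Gamma_nat_eq_factorial]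

end FTTR

open FTTR in
/-- For even `n ≥ 2`, `d_n⁻¹ = n(n−2)⋯2`, `R > 0` and a Schwartz function `φ`,
`d_n ((1/R)(∂/∂R))^{(n−2)/2} ( (1/vₙ) ∫_{B(0,R)} (R² − |x|²)^{−1/2} φ̂(x) dx )
  = ∫_{ℝⁿ} (sin(R|ξ|)/|ξ|) φ(ξ) dξ`,
with `sin(R|ξ|)/|ξ|` interpreted as `R` at `ξ = 0`. -/
theorem fourier_transform_of_T_R_even (n : ℕ) (hn : 2 ≤ n) (heven : Even n)
    (d : ℝ) (hd : d⁻¹ = (Nat.doubleFactorial n : ℝ)) (R : ℝ) (hR : 0 < R)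
    (φ : SchwartzMap (EuclideanSpace ℝ (Fin n)) ℂ) :
    (d : ℂ) *
        invRDerivC^[(n - 2) / 2]
          (fun ρ : ℝ => (1 / (unitBallVol n : ℂ)) *
            ∫ x in ball (0 : EuclideanSpace ℝ (Fin n)) ρ,
              ((1 / Real.sqrt (ρ ^ 2 - ‖x‖ ^ 2) : ℝ) : ℂ) * fourierTf (fun y => φ y) x) R =
      ∫ ξ : EuclideanSpace ℝ (Fin n),
        (if ξ = 0 then (R : ℂ) else ((Real.sin (R * ‖ξ‖) / ‖ξ‖ : ℝ) : ℂ)) * φ ξ := by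
  obtain ⟨m, rfl⟩ : ∃ m, n = 2*m+1+1 := by
    obtain ⟨t, ht⟩ := heven
    exact ⟨t - 1, by omega⟩
  rw [show (2*m+1+1-2)/2 = m from by omega]
  have hφint : Integrable (fun ξ : EuclideanSpace ℝ (Fin (2*m+1+1)) => (φ ξ : ℂ)) :=
    φ.integrable
  -- volume facts
  have hvN : unitBallVol (2*m+1+1) = Real.pi^(m+1) / (Nat.factorial (m+1)) := by
    rw [show 2*m+1+1 = 2*(m+1) from by ring, unitBallVol_even]
  have hvNpos : 0 < unitBallVol (2*m+1+1) := by
    rw [hvN]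
    positivity
  have hv2m : unitBallVol (2*m) = Real.pi^m / (Nat.factorial m) := unitBallVol_even m
  set c₀ : ℝ := Real.pi * unitBallVol (2*m) / unitBallVol (2*m+1+1) with hc₀
  have hfacne : ((Nat.factorial m : ℝ)) ≠ 0 := by exact_mod_cast Nat.factorial_ne_zero m
  have hc₀val : c₀ = (m:ℝ)+1 := by
    rw [hc₀, hvN, hv2m, Nat.factorial_succ]
    have hπ := Real.pi_pos
    push_cast
    field_simp
    ring
  -- the Psi functions
  set Ψ : ℕ → ℝ → ℂ := fun j r => ((c₀:ℝ):ℂ) *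
    ∫ ξ : EuclideanSpace ℝ (Fin (2*m+1+1)), φ ξ * GFun j ‖ξ‖ r with hΨ
  have hF : ∀ (j : ℕ) (ρ : ℝ), HasDerivAt (Ψ (j+1)) ((2*(j:ℂ)+2) * (ρ:ℂ) * Ψ j ρ) ρ := by
    intro j ρ
    have h := (hasDerivAt_Phi (fun ξ => (φ ξ : ℂ)) hφint j ρ).const_mul ((c₀:ℝ):ℂ)
    refine h.congr_deriv ?_
    symm
    simp only [hΨ]
    ring
  -- the function agrees with Ψ m on Ioi 0
  have hEq : Set.EqOn (fun ρ : ℝ => (1 / (unitBallVol (2*m+1+1) : ℂ)) *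
      ∫ x in ball (0 : EuclideanSpace ℝ (Fin (2*m+1+1))) ρ,
        ((1 / Real.sqrt (ρ ^ 2 - ‖x‖ ^ 2) : ℝ) : ℂ) * fourierTf (fun y => φ y) x)
      (Ψ m) (Set.Ioi 0) := by
    intro ρ hρ
    have hρ0 : 0 < ρ := hρ
    show (1 / (unitBallVol (2*m+1+1) : ℂ)) *
      (∫ x in ball (0 : EuclideanSpace ℝ (Fin (2*m+1+1))) ρ,
        ((1 / Real.sqrt (ρ ^ 2 - ‖x‖ ^ 2) : ℝ) : ℂ) * fourierTf (fun y => φ y) x) = Ψ m ρ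
    have hW0 : ∀ x : EuclideanSpace ℝ (Fin (2*m+1+1)), x ∉ ball (0:EuclideanSpace ℝ (Fin (2*m+1+1))) ρ →
        ((1 / Real.sqrt (ρ ^ 2 - ‖x‖ ^ 2) : ℝ) : ℂ) * fourierTf (fun y => φ y) x = 0 := by
      intro x hx
      have hxn : ρ ≤ ‖x‖ := by
        simpa [mem_ball, dist_zero_right, not_lt] using hx
      have h0 : ρ^2 - ‖x‖^2 ≤ 0 := by nlinarith [norm_nonneg x]
      rw [sqrt_zero_of_nonpos h0]
      simp
    rw [setIntegral_eq_integral_of_forall_compl_eq_zero hW0]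
    -- Fubini
    have hWint : Integrable (fun x : EuclideanSpace ℝ (Fin (2*m+1+1)) =>
        (1 / Real.sqrt (ρ^2 - ‖x‖^2) : ℝ)) := by
      have h := (main_integrable m ρ 0 hρ0).norm
      have h2 : (fun x : EuclideanSpace ℝ (Fin (2*m+1+1)) =>
          ‖((1 / Real.sqrt (ρ^2-‖x‖^2) : ℝ):ℂ) * Complex.exp (-Complex.I * ((0 * x 0 : ℝ):ℂ))‖)
          = fun x : EuclideanSpace ℝ (Fin (2*m+1+1)) => (1 / Real.sqrt (ρ^2-‖x‖^2) : ℝ) := by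
        funext x
        rw [norm_mul, norm_cexp_neg_I_mul, mul_one, Complex.norm_real, Real.norm_eq_abs,
          abs_of_nonneg (by positivity)]
      rw [h2] at h
      exact h
    have hWmeas : Measurable (fun x : EuclideanSpace ℝ (Fin (2*m+1+1)) =>
        (1 / Real.sqrt (ρ^2 - ‖x‖^2) : ℝ)) := by
      simp_rw [one_div]
      exact ((Real.continuous_sqrt.comp ((continuous_const.sub
        ((continuous_norm).pow 2)))).measurable).inv
    have hprod : Integrable (Function.uncurry fun (x y : EuclideanSpace ℝ (Fin (2*m+1+1))) =>
        ((1 / Real.sqrt (ρ^2 - ‖x‖^2) : ℝ) : ℂ) *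
          (φ y * Complex.exp (-Complex.I * ((inner ℝ y x : ℝ) : ℂ))))
        (volume.prod volume) := by
      apply Integrable.mono' (g := fun p : EuclideanSpace ℝ (Fin (2*m+1+1)) × EuclideanSpace ℝ (Fin (2*m+1+1)) =>
        (1 / Real.sqrt (ρ^2 - ‖p.1‖^2)) * ‖φ p.2‖)
      · exact hWint.mul_prod hφint.norm
      · apply AEStronglyMeasurable.mul
        · exact (Complex.measurable_ofReal.comp (hWmeas.comp measurable_fst)).aestronglyMeasurable
        · apply Continuous.aestronglyMeasurable
          apply Continuous.mul
          · exact φ.continuous.comp continuous_snd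
          · apply Complex.continuous_exp.comp
            apply Continuous.mul continuous_const
            exact Complex.continuous_ofReal.comp
              (continuous_inner.comp (continuous_snd.prodMk continuous_fst))
      · apply ae_of_all
        intro p
        rw [Function.uncurry]
        rw [norm_mul, norm_mul, norm_cexp_neg_I_mul, mul_one, Complex.norm_real,
          Real.norm_eq_abs, abs_of_nonneg (by positivity)]
    have hfour : (fun x : EuclideanSpace ℝ (Fin (2*m+1+1)) =>
        ((1 / Real.sqrt (ρ ^ 2 - ‖x‖ ^ 2) : ℝ) : ℂ) * fourierTf (fun y => φ y) x)
        = fun x => ∫ y, ((1 / Real.sqrt (ρ ^ 2 - ‖x‖ ^ 2) : ℝ) : ℂ) *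
            (φ y * Complex.exp (-Complex.I * ((inner ℝ y x : ℝ) : ℂ))) := by
      funext x
      rw [fourierTf, ← MeasureTheory.integral_const_mul]
    rw [hfour]
    rw [MeasureTheory.integral_integral_swap hprod]
    -- inner x-integral
    have hinner : ∀ y : EuclideanSpace ℝ (Fin (2*m+1+1)),
        (∫ x : EuclideanSpace ℝ (Fin (2*m+1+1)),
          ((1 / Real.sqrt (ρ ^ 2 - ‖x‖ ^ 2) : ℝ) : ℂ) *
            (φ y * Complex.exp (-Complex.I * ((inner ℝ y x : ℝ) : ℂ))))
        = φ y * (((Real.pi * unitBallVol (2*m) : ℝ) : ℂ) * GFun m ‖y‖ ρ) := by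
      intro y
      have hpull : (fun x : EuclideanSpace ℝ (Fin (2*m+1+1)) =>
          ((1 / Real.sqrt (ρ ^ 2 - ‖x‖ ^ 2) : ℝ) : ℂ) *
            (φ y * Complex.exp (-Complex.I * ((inner ℝ y x : ℝ) : ℂ))))
          = fun x => φ y * (((1 / Real.sqrt (ρ ^ 2 - ‖x‖ ^ 2) : ℝ) : ℂ) *
            Complex.exp (-Complex.I * ((inner ℝ y x : ℝ) : ℂ))) := by
        funext x
        ring
      rw [hpull, MeasureTheory.integral_const_mul]
      congr 1
      have hrot := rot (2*m+1) (fun s => 1/Real.sqrt (ρ^2 - s^2)) y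
      have hrot' : (∫ x : EuclideanSpace ℝ (Fin (2*m+1+1)),
          ((1 / Real.sqrt (ρ ^ 2 - ‖x‖ ^ 2) : ℝ) : ℂ) *
            Complex.exp (-Complex.I * ((inner ℝ y x : ℝ) : ℂ)))
          = ∫ x : EuclideanSpace ℝ (Fin (2*m+1+1)),
            ((1 / Real.sqrt (ρ ^ 2 - ‖x‖ ^ 2) : ℝ) : ℂ) *
              Complex.exp (-Complex.I * ((‖y‖ * x 0 : ℝ) : ℂ)) := hrot
      rw [hrot', main_slice m ρ ‖y‖ hρ0, interval_to_G m ‖y‖ ρ hρ0.ne']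
    rw [show (fun y : EuclideanSpace ℝ (Fin (2*m+1+1)) =>
        ∫ x : EuclideanSpace ℝ (Fin (2*m+1+1)),
          ((1 / Real.sqrt (ρ ^ 2 - ‖x‖ ^ 2) : ℝ) : ℂ) *
            (φ y * Complex.exp (-Complex.I * ((inner ℝ y x : ℝ) : ℂ))))
        = fun y => φ y * (((Real.pi * unitBallVol (2*m) : ℝ) : ℂ) * GFun m ‖y‖ ρ)
      from funext hinner]
    -- constants
    simp only [hΨ]
    rw [← MeasureTheory.integral_const_mul, ← MeasureTheory.integral_const_mul]
    congr 1
    funext y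
    rw [hc₀]
    have hvne : (unitBallVol (2*m+1+1) : ℂ) ≠ 0 := by
      exact_mod_cast Complex.ofReal_ne_zero.2 hvNpos.ne'
    push_cast
    field_simp
  -- apply the iteration
  have hiter := iterate_congr isOpen_Ioi hEq m (Set.mem_Ioi.2 hR)
  rw [hiter]
  have hgen := iter_general Ψ hF m 0 R hR.ne'
  rw [Nat.zero_add] at hgen
  rw [hgen]
  -- constants
  have hd' : d = ((2^(m+1) * Nat.factorial (m+1) : ℕ) : ℝ)⁻¹ := by
    have h2 : d⁻¹ = ((2^(m+1) * Nat.factorial (m+1) : ℕ) : ℝ) := by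
      rw [hd]
      congr 1
      rw [show 2*m+1+1 = 2*(m+1) from by ring]
      exact_mod_cast Nat.doubleFactorial_two_mul (m+1)
    rw [← h2, inv_inv]
  have hK : d * ((2:ℝ)^m * (Nat.factorial m : ℝ) / (Nat.factorial 0 : ℝ)) * c₀ = 1/2 := by
    rw [hd', hc₀val, Nat.factorial_succ, Nat.factorial_zero]
    push_cast
    have h1 : ((m:ℝ)+1) ≠ 0 := by positivity
    field_simp
    ring
  have hKc : (d:ℂ) * ((2:ℂ)^m * (Nat.factorial m : ℂ) / (Nat.factorial 0 : ℂ)) *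
      ((c₀:ℝ):ℂ) = 1/2 := by
    have h := congrArg (fun t : ℝ => (t : ℂ)) hK
    push_cast at h
    exact h
  have hpt : ∀ ξ : EuclideanSpace ℝ (Fin (2*m+1+1)), (1/2 : ℂ) * (φ ξ * GFun 0 ‖ξ‖ R)
      = (if ξ = 0 then (R : ℂ) else ((Real.sin (R * ‖ξ‖) / ‖ξ‖ : ℝ) : ℂ)) * φ ξ := by
    intro ξ
    by_cases hξ : ξ = 0
    · subst hξ
      rw [if_pos rfl, norm_zero]
      linear_combination (φ 0) * GFun_zero_freq R
    · rw [if_neg hξ]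
      have hk : ‖ξ‖ ≠ 0 := norm_ne_zero_iff.2 hξ
      linear_combination (φ ξ) * final_pointwise ‖ξ‖ R hR hk
  have hhalf : (1/2:ℂ) * (∫ ξ : EuclideanSpace ℝ (Fin (2*m+1+1)), φ ξ * GFun 0 ‖ξ‖ R)
      = ∫ ξ : EuclideanSpace ℝ (Fin (2*m+1+1)),
          (if ξ = 0 then (R : ℂ) else ((Real.sin (R * ‖ξ‖) / ‖ξ‖ : ℝ) : ℂ)) * φ ξ := by
    rw [← MeasureTheory.integral_const_mul]
    congr 1
    funext ξ
    exact hpt ξ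
  simp only [hΨ]
  push_cast
  push_cast at hhalf
  linear_combination (∫ ξ : EuclideanSpace ℝ (Fin (2*m+1+1)), φ ξ * GFun 0 ‖ξ‖ R) * hKc + hhalf
end
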